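/- arXiv:2007.11433 — 12 statements merged into one kernel-verified Lean document; each statement's English description precedes it below -/
import Mathlib

section
/- Let d ≥ 2. The set 𝒞_d of d×d equal-input Markov matrices is convex, and it equals the convex hull of the d+2 matrices I, G_d, E₁, …, E_d, where E_i is the Markov matrix all of whose rows equal the standard basis vector e_i, and G_d = (1/(d-1))·(J - I) with J the all-ones matrix. Moreover, these d+2 matrices are exactly the extreme points of 𝒞_d. -/
open Matrix

/-- A Markov matrix: nonnegative entries, each row sums to 1. -/
def IsMarkov {d : ℕ} (M : Matrix (Fin d) (Fin d) ℝ) : Prop :=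
  (∀ i j, 0 ≤ M i j) ∧ ∀ i, ∑ j, M i j = 1

/-- An equal-input matrix: `M = (1-c)·I + C` with `C` nonnegative, with equal
rows, and with parameter sum `c`. -/
def IsEqualInput {d : ℕ} (M : Matrix (Fin d) (Fin d) ℝ) : Prop :=
  ∃ (c : ℝ) (C : Matrix (Fin d) (Fin d) ℝ),
    (∀ i j, 0 ≤ C i j) ∧ (∀ i i', C i = C i') ∧ (∀ i, ∑ j, C i j = c) ∧
    M = (1 - c) • (1 : Matrix (Fin d) (Fin d) ℝ) + C

/-- The set `𝒞_d` of equal-input Markov matrices. -/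
def equalInputSet (d : ℕ) : Set (Matrix (Fin d) (Fin d) ℝ) :=
  {M | IsMarkov M ∧ IsEqualInput M}

/-- `E_i`: the Markov matrix all of whose rows are the standard basis vector `e_i`. -/
def Ecol {d : ℕ} (i : Fin d) : Matrix (Fin d) (Fin d) ℝ :=
  Matrix.of fun _ j => if j = i then 1 else 0

/-- `G_d = (1/(d-1))·(J - I)` with `J` the all-ones matrix. -/
noncomputable def Gmat (d : ℕ) : Matrix (Fin d) (Fin d) ℝ :=
  ((d : ℝ) - 1)⁻¹ • ((Matrix.of fun _ _ => (1 : ℝ)) - 1)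

lemma eis_mem_iff {d : ℕ} (hd : 0 < d) (M : Matrix (Fin d) (Fin d) ℝ) :
    M ∈ equalInputSet d ↔ ∃ x : Fin d → ℝ, (∀ j, 0 ≤ x j) ∧
      (∀ i, (∑ j, x j) - 1 ≤ x i) ∧
      (∀ i j, M i j = (if i = j then 1 - ∑ k, x k else 0) + x j) := by
  constructor
  · rintro ⟨⟨hnn, hsum⟩, c, C, hC0, hrow, hcsum, hMeq⟩
    set z : Fin d := ⟨0, hd⟩
    refine ⟨C z, fun j => hC0 z j, ?_, ?_⟩
    · intro i
      have hMii : 0 ≤ M i i := hnn i i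
      have hE : M i i = (1 - c) + C z i := by
        rw [hMeq]
        simp [Matrix.add_apply, Matrix.one_apply]
        have := congrFun (hrow i z) i
        linarith [this]
      have hc : ∑ j, C z j = c := hcsum z
      rw [hc]; linarith [hE ▸ hMii]
    · intro i j
      have hc : ∑ k, C z k = c := hcsum z
      rw [hMeq, hc]
      have hCz : C i j = C z j := by rw [hrow i z]
      by_cases h : i = j
      · subst h; simp [Matrix.add_apply, Matrix.one_apply, hCz]
      · simp [Matrix.add_apply, Matrix.one_apply, h, hCz]
  · rintro ⟨x, hx0, hxc, hM⟩
    set c := ∑ k, x k with hc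
    refine ⟨⟨?_, ?_⟩, c, Matrix.of fun _ j => x j, fun i j => hx0 j,
      fun i i' => rfl, fun i => rfl, ?_⟩
    · intro i j
      rw [hM i j]
      by_cases h : i = j
      · subst h
        have := hxc i
        simp only [if_true, eq_self_iff_true]
        linarith
      · simp only [if_neg h, zero_add]; exact hx0 j
    · intro i
      have : ∀ j, M i j = (if i = j then 1 - c else 0) + x j := fun j => hM i j
      rw [Finset.sum_congr rfl fun j _ => this j, Finset.sum_add_distrib]
      simp [hc]
    · ext i j
      rw [hM i j]
      by_cases h : i = j <;> simp [Matrix.add_apply, Matrix.one_apply, h]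

lemma Gmat_apply {d : ℕ} (i j : Fin d) :
    Gmat d i j = ((d : ℝ) - 1)⁻¹ * (1 - if i = j then 1 else 0) := by
  simp [Gmat, Matrix.sub_apply, Matrix.one_apply]

lemma eis_convex {d : ℕ} (hd : 0 < d) : Convex ℝ (equalInputSet d) := by
  intro M hM N hN a b ha hb hab
  rw [eis_mem_iff hd] at hM hN ⊢
  obtain ⟨x, hx0, hxc, hxM⟩ := hM
  obtain ⟨y, hy0, hyc, hyN⟩ := hN
  refine ⟨fun j => a * x j + b * y j, ?_, ?_, ?_⟩
  · intro j; have := hx0 j; have := hy0 j; positivity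
  · intro i
    have hsx : ∑ j, (a * x j + b * y j) = a * ∑ j, x j + b * ∑ j, y j := by
      rw [Finset.sum_add_distrib, ← Finset.mul_sum, ← Finset.mul_sum]
    rw [hsx]
    show a * ∑ j, x j + b * ∑ j, y j - 1 ≤ a * x i + b * y i
    have h1 := mul_le_mul_of_nonneg_left (hxc i) ha
    have h2 := mul_le_mul_of_nonneg_left (hyc i) hb
    nlinarith
  · intro i j
    have hsx : ∑ k, (a * x k + b * y k) = a * ∑ k, x k + b * ∑ k, y k := by
      rw [Finset.sum_add_distrib, ← Finset.mul_sum, ← Finset.mul_sum]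
    have : (a • M + b • N) i j = a * M i j + b * N i j := by
      simp [Matrix.add_apply]
    rw [this, hxM i j, hyN i j, hsx]
    by_cases h : i = j <;> simp [h] <;> ring_nf <;> nlinarith [hab]

lemma one_mem_eis {d : ℕ} (hd : 0 < d) :
    (1 : Matrix (Fin d) (Fin d) ℝ) ∈ equalInputSet d := by
  rw [eis_mem_iff hd]
  exact ⟨fun _ => 0, fun _ => le_refl _, fun i => by simp,
    fun i j => by by_cases h : i = j <;> simp [Matrix.one_apply, h]⟩

lemma Ecol_mem_eis {d : ℕ} (hd : 0 < d) (k : Fin d) :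
    Ecol k ∈ equalInputSet d := by
  rw [eis_mem_iff hd]
  refine ⟨fun j => if j = k then 1 else 0, fun j => by positivity, ?_, ?_⟩
  · intro i
    have : ∑ j, (if j = k then (1:ℝ) else 0) = 1 := by simp
    rw [this]; by_cases h : i = k <;> simp [h]
  · intro i j
    have : ∑ j, (if j = k then (1:ℝ) else 0) = 1 := by simp
    rw [this]
    by_cases h : i = j <;> simp [Ecol, h]

lemma dm1_ne {d : ℕ} (hd : 2 ≤ d) : ((d : ℝ) - 1) ≠ 0 := by
  have : (2:ℝ) ≤ (d:ℝ) := by exact_mod_cast hd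
  linarith

lemma Gmat_mem_eis {d : ℕ} (hd : 2 ≤ d) : Gmat d ∈ equalInputSet d := by
  have hd0 : 0 < d := by omega
  have hne := dm1_ne hd
  have h2 : (2:ℝ) ≤ (d:ℝ) := by exact_mod_cast hd
  rw [eis_mem_iff hd0]
  have hpos : (0:ℝ) < (d:ℝ) - 1 := by linarith
  have key : (d : ℝ) * ((d:ℝ)-1)⁻¹ - 1 = ((d:ℝ)-1)⁻¹ := by
    field_simp
    ring
  refine ⟨fun _ => ((d : ℝ) - 1)⁻¹, fun j => by positivity, ?_, ?_⟩
  · intro i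
    have : ∑ _j : Fin d, ((d : ℝ) - 1)⁻¹ = d * ((d:ℝ)-1)⁻¹ := by
      simp [Finset.sum_const, mul_comm]
    simp only []
    rw [this, key]
  · intro i j
    have hs : ∑ _k : Fin d, ((d : ℝ) - 1)⁻¹ = d * ((d:ℝ)-1)⁻¹ := by
      simp [Finset.sum_const, mul_comm]
    rw [Gmat_apply, hs]
    by_cases h : i = j <;> simp [h] <;> field_simp <;> ring

lemma eis_subset_hull {d : ℕ} (hd : 2 ≤ d) :
    equalInputSet d ⊆ convexHull ℝ (insert (1 : Matrix (Fin d) (Fin d) ℝ)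
      (insert (Gmat d) (Set.range (Ecol (d := d))))) := by
  intro M hM
  have hd0 : 0 < d := by omega
  have hpos : (0:ℝ) < (d:ℝ) - 1 := by
    have : (2:ℝ) ≤ (d:ℝ) := by exact_mod_cast hd
    linarith
  rw [eis_mem_iff hd0] at hM
  obtain ⟨x, hx0, hxc, hMx⟩ := hM
  set c := ∑ k, x k with hc
  set t := max (c - 1) 0 with ht
  set w : Option (Option (Fin d)) → ℝ := fun o => Option.elim o (1 - c + t)
      (fun o' => Option.elim o' (((d:ℝ)-1) * t) (fun j => x j - t)) with hw
  set z : Option (Option (Fin d)) → Matrix (Fin d) (Fin d) ℝ := fun o =>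
      Option.elim o 1 (fun o' => Option.elim o' (Gmat d) Ecol) with hz
  have ht0 : 0 ≤ t := le_max_right _ _
  have htc : c - 1 ≤ t := le_max_left _ _
  have hw0 : ∀ o ∈ Finset.univ, 0 ≤ w o := by
    rintro (_ | _ | j) _
    · simp only [hw, Option.elim]; linarith
    · simp only [hw, Option.elim]; positivity
    · simp only [hw, Option.elim]
      have h1 := hxc j
      have h2 := hx0 j
      have : t ≤ x j := max_le (by linarith) h2
      linarith
  have hwsum : ∑ o, w o = 1 := by
    rw [Fintype.sum_option, Fintype.sum_option]
    have : ∑ j : Fin d, w (some (some j)) = c - d * t := by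
      simp only [hw, Option.elim]
      rw [Finset.sum_sub_distrib]
      simp [hc, mul_comm]
    rw [this]
    simp only [hw, Option.elim]
    ring
  have hzmem : ∀ o ∈ Finset.univ, z o ∈ (insert (1 : Matrix (Fin d) (Fin d) ℝ)
      (insert (Gmat d) (Set.range (Ecol (d := d))))) := by
    rintro (_ | _ | j) _
    · exact Set.mem_insert _ _
    · exact Set.mem_insert_of_mem _ (Set.mem_insert _ _)
    · exact Set.mem_insert_of_mem _ (Set.mem_insert_of_mem _ ⟨j, rfl⟩)
  have hmem := Finset.centerMass_mem_convexHull Finset.univ hw0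
    (by rw [hwsum]; norm_num) hzmem
  rw [Finset.centerMass_eq_of_sum_1 _ _ hwsum] at hmem
  have hMeq : ∑ o, w o • z o = M := by
    ext i j
    rw [Matrix.sum_apply]
    rw [Fintype.sum_option, Fintype.sum_option]
    have hE : ∑ k : Fin d, (w (some (some k)) • z (some (some k))) i j = x j - t := by
      simp only [hw, hz, Option.elim, Matrix.smul_apply, smul_eq_mul, Ecol, Matrix.of_apply]
      rw [Finset.sum_congr rfl (fun k _ => by rw [mul_ite, mul_one, mul_zero])]
      simp
    rw [hE]
    simp only [hw, hz, Option.elim, Matrix.smul_apply, smul_eq_mul, Matrix.one_apply,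
      Gmat_apply, hMx i j]
    by_cases h : i = j
    · simp only [h, if_pos rfl]
      simp <;> ring
    · simp only [if_neg h]
      rw [show ((d:ℝ) - 1) * t * (((d:ℝ) - 1)⁻¹ * (1 - 0)) = t from by
        rw [sub_zero, mul_one, mul_comm ((d:ℝ) - 1) t, mul_inv_cancel_right₀ hpos.ne']]
      ring
  rwa [hMeq] at hmem

lemma force_zero {a b u v : ℝ} (ha : 0 < a) (hb : 0 < b) (hu : 0 ≤ u) (hv : 0 ≤ v)
    (h : a * u + b * v = 0) : u = 0 ∧ v = 0 := by
  constructor <;> nlinarith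

lemma markov_single {d : ℕ} (M : Matrix (Fin d) (Fin d) ℝ) (hM : IsMarkov M)
    (f : Fin d → Fin d) (h0 : ∀ i j, j ≠ f i → M i j = 0) : ∀ i, M i (f i) = 1 := by
  intro i
  have hs := hM.2 i
  rwa [Finset.sum_eq_single_of_mem (f i) (Finset.mem_univ _)
    (fun j _ hj => h0 i j hj)] at hs

lemma one_extreme {d : ℕ} (hd : 2 ≤ d) :
    (1 : Matrix (Fin d) (Fin d) ℝ) ∈ Set.extremePoints ℝ (equalInputSet d) := by
  have hd0 : 0 < d := by omega
  refine ⟨one_mem_eis hd0, ?_⟩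
  rintro M₁ h1 M₂ h2 ⟨a, b, ha, hb, hab, heq⟩
  have hent : ∀ i j, a * M₁ i j + b * M₂ i j = (1 : Matrix (Fin d) (Fin d) ℝ) i j :=
    fun i j => by rw [← heq]; simp [Matrix.add_apply]
  have hz : ∀ i j, i ≠ j → M₁ i j = 0 ∧ M₂ i j = 0 := by
    intro i j hij
    refine force_zero ha hb (h1.1.1 i j) (h2.1.1 i j) ?_
    rw [hent i j, Matrix.one_apply_ne hij]
  have key : ∀ M : Matrix (Fin d) (Fin d) ℝ, IsMarkov M →
      (∀ i j, i ≠ j → M i j = 0) → M = 1 := by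
    intro M hM h0
    ext i j
    by_cases h : i = j
    · subst h
      have := markov_single M hM id (fun i j hj => h0 i j (Ne.symm hj)) i
      simp only [id] at this
      rw [this, Matrix.one_apply_eq]
    · rw [h0 i j h, Matrix.one_apply_ne h]
  exact key M₁ h1.1 (fun i j hij => (hz i j hij).1)

lemma Ecol_extreme {d : ℕ} (hd : 2 ≤ d) (k : Fin d) :
    Ecol k ∈ Set.extremePoints ℝ (equalInputSet d) := by
  have hd0 : 0 < d := by omega
  refine ⟨Ecol_mem_eis hd0 k, ?_⟩
  rintro M₁ h1 M₂ h2 ⟨a, b, ha, hb, hab, heq⟩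
  have hent : ∀ i j, a * M₁ i j + b * M₂ i j = Ecol k i j :=
    fun i j => by rw [← heq]; simp [Matrix.add_apply]
  have hz : ∀ i j, j ≠ k → M₁ i j = 0 ∧ M₂ i j = 0 := by
    intro i j hjk
    refine force_zero ha hb (h1.1.1 i j) (h2.1.1 i j) ?_
    rw [hent i j]
    simp [Ecol, hjk]
  have key : ∀ M : Matrix (Fin d) (Fin d) ℝ, IsMarkov M →
      (∀ i j, j ≠ k → M i j = 0) → M = Ecol k := by
    intro M hM h0
    ext i j
    by_cases h : j = k
    · subst h
      rw [markov_single M hM (fun _ => j) (fun i j' hj' => h0 i j' hj') i]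
      simp [Ecol]
    · rw [h0 i j h]; simp [Ecol, h]
  exact key M₁ h1.1 (fun i j hj => (hz i j hj).1)

lemma eq_G_of_diag_zero {d : ℕ} (hd : 2 ≤ d) (M : Matrix (Fin d) (Fin d) ℝ)
    (hM : M ∈ equalInputSet d) (hdiag : ∀ i, M i i = 0) : M = Gmat d := by
  have hd0 : 0 < d := by omega
  have hdr : (2:ℝ) ≤ (d:ℝ) := by exact_mod_cast hd
  have hpos : (0:ℝ) < (d:ℝ) - 1 := by linarith
  rw [eis_mem_iff hd0] at hM
  obtain ⟨x, hx0, hxc, hMx⟩ := hM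
  set c := ∑ k, x k with hc
  have hxi : ∀ i, x i = c - 1 := by
    intro i
    have := hMx i i
    rw [hdiag i, if_pos rfl] at this
    linarith
  have hcd : c = d * (c - 1) := by
    rw [hc]
    conv_lhs => rw [Finset.sum_congr rfl (fun i _ => hxi i)]
    simp [Finset.sum_const, mul_comm]
    rw [← hc]; ring
  have h1 : (c - 1) * ((d:ℝ) - 1) = 1 := by nlinarith
  have hval : c - 1 = ((d:ℝ) - 1)⁻¹ := by
    field_simp
    linarith
  ext i j
  rw [hMx i j, Gmat_apply]
  by_cases h : i = j
  · subst h
    have := hMx i i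
    rw [hdiag i, if_pos rfl] at this
    simp only [if_true, if_pos rfl]
    linarith
  · rw [if_neg h, if_neg h, zero_add, hxi j, hval]
    ring

lemma Gmat_extreme {d : ℕ} (hd : 2 ≤ d) :
    Gmat d ∈ Set.extremePoints ℝ (equalInputSet d) := by
  refine ⟨Gmat_mem_eis hd, ?_⟩
  rintro M₁ h1 M₂ h2 ⟨a, b, ha, hb, hab, heq⟩
  have hent : ∀ i j, a * M₁ i j + b * M₂ i j = Gmat d i j :=
    fun i j => by rw [← heq]; simp [Matrix.add_apply]
  have hz : ∀ i, M₁ i i = 0 ∧ M₂ i i = 0 := by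
    intro i
    refine force_zero ha hb (h1.1.1 i i) (h2.1.1 i i) ?_
    rw [hent i i, Gmat_apply, if_pos rfl]
    ring
  exact eq_G_of_diag_zero hd M₁ h1 (fun i => (hz i).1)

lemma Ecol_injective {d : ℕ} : Function.Injective (Ecol (d := d)) := by
  intro i j h
  by_contra hne
  have := congrFun (congrFun h i) i
  simp only [Ecol, Matrix.of_apply, if_pos rfl] at this
  rw [if_neg hne] at this
  norm_num at this

lemma one_not_mem {d : ℕ} (hd : 2 ≤ d) :
    (1 : Matrix (Fin d) (Fin d) ℝ) ∉ insert (Gmat d) (Set.range (Ecol (d := d))) := by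
  have hd0 : 0 < d := by omega
  rintro (h | ⟨j, hj⟩)
  · have := congrFun (congrFun h ⟨0, hd0⟩) ⟨0, hd0⟩
    rw [Matrix.one_apply_eq, Gmat_apply, if_pos rfl] at this
    simp at this
  · set i : Fin d := if j = ⟨0, hd0⟩ then ⟨1, by omega⟩ else ⟨0, hd0⟩ with hi
    have hij : i ≠ j := by
      by_cases h' : j = ⟨0, hd0⟩ <;> simp [hi, h'] <;> exact fun hc => by
        simp [hc] at h' <;> exact absurd (Fin.val_eq_val _ _ |>.mpr hc) (by simp [h'])
    have := congrFun (congrFun hj i) i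
    rw [Matrix.one_apply_eq] at this
    simp [Ecol, hij] at this
  -- done

lemma Gmat_not_mem {d : ℕ} (hd : 2 ≤ d) :
    Gmat d ∉ Set.range (Ecol (d := d)) := by
  rintro ⟨j, hj⟩
  have := congrFun (congrFun hj j) j
  rw [Gmat_apply, if_pos rfl] at this
  simp [Ecol] at this

/-- `𝒞_d` is convex, equals the convex hull of the `d+2` matrices
`I, G_d, E₁, …, E_d`, and these are exactly its extreme points. -/
theorem stmt_3 {d : ℕ} (hd : 2 ≤ d) :
    Convex ℝ (equalInputSet d) ∧
    equalInputSet d =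
      convexHull ℝ (insert (1 : Matrix (Fin d) (Fin d) ℝ)
        (insert (Gmat d) (Set.range (Ecol (d := d))))) ∧
    Set.extremePoints ℝ (equalInputSet d) =
      insert (1 : Matrix (Fin d) (Fin d) ℝ)
        (insert (Gmat d) (Set.range (Ecol (d := d)))) ∧
    (insert (1 : Matrix (Fin d) (Fin d) ℝ)
        (insert (Gmat d) (Set.range (Ecol (d := d))))).ncard = d + 2 := by
  have hd0 : 0 < d := by omega
  have hconv := eis_convex (d := d) hd0
  have hSsub : (insert (1 : Matrix (Fin d) (Fin d) ℝ)
      (insert (Gmat d) (Set.range (Ecol (d := d))))) ⊆ equalInputSet d := by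
    rintro P (rfl | rfl | ⟨j, rfl⟩)
    · exact one_mem_eis hd0
    · exact Gmat_mem_eis hd
    · exact Ecol_mem_eis hd0 j
  have hhull : equalInputSet d =
      convexHull ℝ (insert (1 : Matrix (Fin d) (Fin d) ℝ)
        (insert (Gmat d) (Set.range (Ecol (d := d))))) := by
    apply le_antisymm
    · exact eis_subset_hull hd
    · exact convexHull_min hSsub hconv
  refine ⟨hconv, hhull, ?_, ?_⟩
  · apply le_antisymm
    · rw [hhull]
      exact extremePoints_convexHull_subset
    · rintro P (rfl | rfl | ⟨j, rfl⟩)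
      · exact one_extreme hd
      · exact Gmat_extreme hd
      · exact Ecol_extreme hd j
  · rw [Set.ncard_insert_of_notMem (one_not_mem hd),
      Set.ncard_insert_of_notMem (Gmat_not_mem hd)]
    rw [← Set.image_univ, Set.ncard_image_of_injective _ Ecol_injective,
      Set.ncard_univ, Nat.card_eq_fintype_card, Fintype.card_fin]
end

section
/- Let d ≥ 2 and let M = (1-c)·I + C be a d×d equal-input Markov matrix with summatory parameter c. Then there exists an equal-input Markov generator Q with exp(Q) = M if and only if 0 ≤ c < 1. In that case, for 0 < c < 1 one may take Q = -(log(1-c)/c)·(M - I), and for c = 0 one has Q = 0. -/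
open Matrix

private lemma hasSum_aux (a : ℝ) (ha : a ≠ 0) :
    HasSum (fun n : ℕ => (((n+1).factorial : ℝ))⁻¹ * (-a) ^ n) ((1 - Real.exp (-a)) / a) := by
  have h0 : HasSum (fun n : ℕ => ((n.factorial : ℝ))⁻¹ * (-a) ^ n) (Real.exp (-a)) := by
    have := NormedSpace.exp_series_hasSum_exp' (𝕂 := ℝ) (-a)
    simpa [Real.exp_eq_exp_ℝ, smul_eq_mul] using this
  have h1 : HasSum (fun n : ℕ => (((n+1).factorial : ℝ))⁻¹ * (-a) ^ (n+1))
      (Real.exp (-a) - 1) := by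
    refine (hasSum_nat_add_iff (f := fun n : ℕ => ((n.factorial : ℝ))⁻¹ * (-a) ^ n) 1).2 ?_
    simpa using h0
  have h2 := h1.mul_left (-a)⁻¹
  have key : ∀ n : ℕ, (-a)⁻¹ * ((((n+1).factorial : ℝ))⁻¹ * (-a) ^ (n+1))
      = (((n+1).factorial : ℝ))⁻¹ * (-a) ^ n := by
    intro n
    rw [pow_succ]
    field_simp
  simp only [key] at h2
  have e : (1 - Real.exp (-a)) / a = (-a)⁻¹ * (Real.exp (-a) - 1) := by
    rw [inv_mul_eq_div, div_neg, ← neg_div, neg_sub]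
  rw [e]; exact h2

private lemma exp_quadratic {d : ℕ} (A : Matrix (Fin d) (Fin d) ℝ) (a : ℝ) (ha : a ≠ 0)
    (hA : A * A = (-a) • A) :
    NormedSpace.exp A = 1 + ((1 - Real.exp (-a)) / a) • A := by
  have hpow : ∀ n : ℕ, A ^ (n + 1) = (-a) ^ n • A := by
    intro n; induction n with
    | zero => simp
    | succ n ih => rw [pow_succ, ih, smul_mul_assoc, hA, smul_smul, pow_succ]
  have h1 : HasSum (fun n : ℕ => (((n+1).factorial : ℝ))⁻¹ • A ^ (n+1))
      (((1 - Real.exp (-a)) / a) • A) := by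
    have h := (hasSum_aux a ha).smul_const A
    convert h using 2 with n
    rw [hpow, smul_smul]
  have h2 : HasSum (fun n : ℕ => ((n.factorial : ℝ))⁻¹ • A ^ n)
      (1 + ((1 - Real.exp (-a)) / a) • A) := by
    have h := (hasSum_nat_add_iff
      (f := fun n : ℕ => ((n.factorial : ℝ))⁻¹ • A ^ n) 1).1 h1
    simpa [add_comm] using h
  rw [NormedSpace.exp_eq_tsum ℝ]
  exact h2.tsum_eq

/-- If `C` has equal rows each summing to `c`, then `C * C = c • C`. -/
private lemma sq_eq {d : ℕ} (cvec : Fin d → ℝ) (C : Matrix (Fin d) (Fin d) ℝ)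
    (hC : ∀ i, C i = cvec) (c : ℝ) (hc : c = ∑ j, cvec j) : C * C = c • C := by
  ext i j
  simp only [Matrix.mul_apply, Matrix.smul_apply, smul_eq_mul]
  have hCij : ∀ i j, C i j = cvec j := fun i j => by rw [hC i]
  simp_rw [hCij]
  rw [← Finset.sum_mul, ← hc]

private lemma quad_of_equal_rows {d : ℕ} (cvec : Fin d → ℝ) (C : Matrix (Fin d) (Fin d) ℝ)
    (hC : ∀ i, C i = cvec) (c : ℝ) (hc : c = ∑ j, cvec j) :
    (C - c • 1) * (C - c • 1) = (-c) • (C - c • 1) := by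
  have h := sq_eq cvec C hC c hc
  have h1 : C * (c • (1 : Matrix (Fin d) (Fin d) ℝ)) = c • C := by
    rw [Matrix.mul_smul, Matrix.mul_one]
  have h2 : (c • (1 : Matrix (Fin d) (Fin d) ℝ)) * C = c • C := by
    rw [Matrix.smul_mul, Matrix.one_mul]
  have h3 : (c • (1 : Matrix (Fin d) (Fin d) ℝ)) * (c • (1 : Matrix (Fin d) (Fin d) ℝ))
      = (c * c) • (1 : Matrix (Fin d) (Fin d) ℝ) := by
    rw [Matrix.smul_mul, Matrix.mul_smul, Matrix.one_mul, smul_smul]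
  rw [sub_mul, mul_sub, mul_sub, h, h1, h2, h3, neg_smul, smul_sub, smul_smul]
  abel

/-- An equal-input generator: `Q = C - c·I` with `C` nonnegative with equal
rows and row sums `c`. -/
def IsEqualInputGen {d : ℕ} (Q : Matrix (Fin d) (Fin d) ℝ) : Prop :=
  ∃ (c : ℝ) (C : Matrix (Fin d) (Fin d) ℝ),
    (∀ i j, 0 ≤ C i j) ∧ (∀ i i', C i = C i') ∧ (∀ i, ∑ j, C i j = c) ∧
    Q = C - c • (1 : Matrix (Fin d) (Fin d) ℝ)


/-- an equal-input Markov matrix is embeddable via an equal-input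
generator iff `0 ≤ c < 1`; in that case one may take
`Q = -(log(1-c)/c)·(M - I)` (and `Q = 0` when `c = 0`). -/
theorem stmt_4 {d : ℕ} (hd : 2 ≤ d)
    (cvec : Fin d → ℝ)
    (C : Matrix (Fin d) (Fin d) ℝ) (hC : ∀ i, C i = cvec)
    (hCnonneg : ∀ i j, 0 ≤ C i j)
    (c : ℝ) (hc : c = ∑ j, cvec j)
    (M : Matrix (Fin d) (Fin d) ℝ)
    (hM : M = (1 - c) • (1 : Matrix (Fin d) (Fin d) ℝ) + C)
    (hMarkov : IsMarkov M) :
    ((∃ Q : Matrix (Fin d) (Fin d) ℝ, IsEqualInputGen Q ∧ NormedSpace.exp Q = M)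
        ↔ (0 ≤ c ∧ c < 1)) ∧
    (0 < c → c < 1 →
      IsEqualInputGen ((-(Real.log (1 - c)) / c) • (M - 1)) ∧
      NormedSpace.exp ((-(Real.log (1 - c)) / c) • (M - 1)) = M) ∧
    (c = 0 → NormedSpace.exp (0 : Matrix (Fin d) (Fin d) ℝ) = M) := by
  have i0 : Fin d := ⟨0, by omega⟩
  have i1 : Fin d := ⟨1, by omega⟩
  have hcvec_nonneg : ∀ j, 0 ≤ cvec j := fun j => by
    have := hCnonneg i0 j; rwa [hC i0] at this
  have hc_nonneg : 0 ≤ c := hc ▸ Finset.sum_nonneg fun j _ => hcvec_nonneg j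
  have hMsub : M - 1 = C - c • 1 := by rw [hM]; ext i j; simp [Matrix.smul_apply]; ring_nf
  -- the case c = 0 : M = 1
  have hczero : c = 0 → M = 1 := by
    intro h0
    have hsum0 : ∑ j, cvec j = 0 := by rw [← hc, h0]
    have hcv : ∀ j, cvec j = 0 := fun j =>
      (Finset.sum_eq_zero_iff_of_nonneg (fun j _ => hcvec_nonneg j)).1 hsum0 j
        (Finset.mem_univ j)
    have hC0 : C = 0 := by ext i j; rw [hC i]; exact hcv j
    rw [hM, h0, hC0]; simp
  -- part 2 : the explicit generator for 0 < c < 1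
  have part2 : 0 < c → c < 1 →
      IsEqualInputGen ((-(Real.log (1 - c)) / c) • (M - 1)) ∧
      NormedSpace.exp ((-(Real.log (1 - c)) / c) • (M - 1)) = M := by
    intro hc0 hc1
    set t : ℝ := -(Real.log (1 - c)) / c with ht
    have hlogneg : Real.log (1 - c) < 0 := Real.log_neg (by linarith) (by linarith)
    have ht_pos : 0 < t := div_pos (by linarith) hc0
    constructor
    · refine ⟨t * c, t • C, fun i j => ?_, fun i i' => ?_, fun i => ?_, ?_⟩
      · exact mul_nonneg ht_pos.le (hCnonneg i j)
      · funext j; simp [hC i, hC i']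
      · simp only [Matrix.smul_apply, smul_eq_mul, ← Finset.mul_sum]
        rw [show ∑ j, C i j = c from by simp_rw [show C i = cvec from hC i]; exact hc.symm]
      · rw [hMsub, smul_sub, smul_smul, mul_comm t c]
    · have hquad : ((t • (M - 1)) * (t • (M - 1))) = (-(t * c)) • (t • (M - 1)) := by
        rw [hMsub]
        rw [smul_mul_assoc, Matrix.mul_smul, quad_of_equal_rows cvec C hC c hc]
        rw [smul_smul, smul_smul, smul_smul]
        ring_nf
      have ha : t * c ≠ 0 := by positivity
      have := exp_quadratic (t • (M - 1)) (t * c) ha hquad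
      rw [this]
      have htc : t * c = -(Real.log (1 - c)) := by
        rw [ht]; field_simp
      have hexp : Real.exp (-(t * c)) = 1 - c := by
        rw [htc, neg_neg, Real.exp_log (by linarith)]
      rw [hexp]
      have htne : t ≠ 0 := ne_of_gt ht_pos
      have hcne : c ≠ 0 := ne_of_gt hc0
      have hcoef : ((1 - (1 - c)) / (t * c)) * t = 1 := by
        field_simp
        ring
      rw [smul_smul, hcoef, one_smul]
      abel
  refine ⟨⟨?_, ?_⟩, part2, fun h0 => by rw [NormedSpace.exp_zero, hczero h0]⟩
  · -- forward: existence → 0 ≤ c ∧ c < 1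
    rintro ⟨Q, ⟨c', C', hC'nonneg, hC'rows, hC'sum, hQ⟩, hexpQ⟩
    refine ⟨hc_nonneg, ?_⟩
    have hc'_nonneg : 0 ≤ c' := (hC'sum i0) ▸ Finset.sum_nonneg fun j _ => hC'nonneg i0 j
    -- in both cases we show: ∀ j, cvec j = g * C' i0 j with g*c' = 1 - exp(-c') or c = 0
    have hMoff : ∀ i j : Fin d, i ≠ j → M i j = cvec j := by
      intro i j hij
      rw [hM]
      simp [Matrix.add_apply, Matrix.smul_apply, Matrix.one_apply_ne hij, hC i]
    have pick : ∀ j : Fin d, ∃ i : Fin d, i ≠ j := by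
      intro j
      rcases eq_or_ne j ⟨0, by omega⟩ with h | h
      · exact ⟨⟨1, by omega⟩, by rw [h]; simp [Fin.ext_iff]⟩
      · exact ⟨⟨0, by omega⟩, fun he => h he.symm⟩
    rcases eq_or_lt_of_le hc'_nonneg with hc'0 | hc'pos
    · -- c' = 0 : Q = 0, M = 1, c = 0
      have hC'0 : C' = 0 := by
        ext i j
        exact (Finset.sum_eq_zero_iff_of_nonneg (fun j _ => hC'nonneg i j)).1
          ((hC'sum i).trans hc'0.symm) j (Finset.mem_univ j)
      have hQ0 : Q = 0 := by rw [hQ, hC'0, ← hc'0]; simp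
      have hM1 : M = 1 := by rw [← hexpQ, hQ0, NormedSpace.exp_zero]
      have hcv : ∀ j, cvec j = 0 := by
        intro j
        obtain ⟨i, hij⟩ := pick j
        have := hMoff i j hij
        rw [hM1, Matrix.one_apply_ne hij] at this
        exact this.symm
      have : c = 0 := by rw [hc]; exact Finset.sum_eq_zero fun j _ => hcv j
      linarith
    · -- c' > 0
      set g : ℝ := (1 - Real.exp (-c')) / c' with hg
      have hquad : Q * Q = (-c') • Q := by
        rw [hQ]
        exact quad_of_equal_rows (C' i0) C' (fun i => hC'rows i i0) c'
          (by rw [← hC'sum i0]) 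
      have hexp := exp_quadratic Q c' (ne_of_gt hc'pos) hquad
      rw [hexpQ] at hexp
      have hentry : ∀ j, cvec j = g * C' i0 j := by
        intro j
        obtain ⟨i, hij⟩ := pick j
        have h1 := hMoff i j hij
        have h2 : M i j = g * Q i j := by
          rw [hexp]
          simp [Matrix.add_apply, Matrix.smul_apply, Matrix.one_apply_ne hij, hg]
        have h3 : Q i j = C' i0 j := by
          rw [hQ]
          simp [Matrix.sub_apply, Matrix.smul_apply, Matrix.one_apply_ne hij, hC'rows i i0]
        rw [← h1, h2, h3]
      have hcval : c = g * c' := by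
        rw [hc, ← hC'sum i0, Finset.mul_sum]
        exact Finset.sum_congr rfl fun j _ => hentry j
      have : g * c' = 1 - Real.exp (-c') := by
        rw [hg]; field_simp
      rw [hcval, this]
      have := Real.exp_pos (-c')
      linarith
  · -- backward: 0 ≤ c ∧ c < 1 → existence
    rintro ⟨h0, h1⟩
    rcases eq_or_lt_of_le h0 with hz | hp
    · exact ⟨0, ⟨0, 0, fun i j => le_refl 0, fun i _ => rfl, fun i => by simp, by simp⟩,
        by rw [NormedSpace.exp_zero, hczero hz.symm]⟩
    · exact ⟨_, (part2 hp h1).1, (part2 hp h1).2⟩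
end

section
/- Let d ≥ 2 and let Q and Q′ be d×d equal-input Markov generators. If exp(Q) = exp(Q′), then Q = Q′. In other words, an equal-input embedding of a Markov matrix is unique among equal-input generators. -/
open Matrix

noncomputable def sfun (a : ℝ) : ℝ := ∑' n : ℕ, ((Nat.factorial (n+1) : ℝ))⁻¹ * a ^ n

lemma sfun_summable (a : ℝ) : Summable (fun n : ℕ => ((Nat.factorial (n+1) : ℝ))⁻¹ * a ^ n) := by
  have h := Real.summable_pow_div_factorial |a|
  refine Summable.of_abs (h.of_nonneg_of_le (fun n => abs_nonneg _) (fun n => ?_))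
  rw [abs_mul, abs_pow, abs_inv, abs_of_nonneg (by positivity)]
  rw [div_eq_mul_inv, mul_comm]
  apply mul_le_mul_of_nonneg_left _ (by positivity)
  apply inv_anti₀ (by positivity)
  exact_mod_cast Nat.factorial_le (Nat.le_succ n)

lemma sfun_key (a : ℝ) : a * sfun a = NormedSpace.exp a - 1 := by
  have hsum : Summable (fun n : ℕ => ((Nat.factorial n : ℝ))⁻¹ • a ^ n) :=
    NormedSpace.expSeries_summable' a
  have : NormedSpace.exp a = ∑' n : ℕ, ((Nat.factorial n : ℝ))⁻¹ • a ^ n := by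
    rw [NormedSpace.exp_eq_tsum (𝕂 := ℝ)]
  rw [this, hsum.tsum_eq_zero_add]
  simp only [Nat.factorial_zero, Nat.cast_one, inv_one, pow_zero, smul_eq_mul, one_mul]
  rw [sfun, ← tsum_mul_left]
  have : ∀ n : ℕ, a * (((Nat.factorial (n+1) : ℝ))⁻¹ * a ^ n)
      = ((Nat.factorial (n+1) : ℝ))⁻¹ * a ^ (n+1) := by
    intro n; ring
  simp_rw [this]
  ring

lemma exp_of_sq {d : ℕ} (A : Matrix (Fin d) (Fin d) ℝ) (a : ℝ) (h : A * A = a • A) :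
    NormedSpace.exp A = 1 + sfun a • A := by
  letI : SeminormedRing (Matrix (Fin d) (Fin d) ℝ) := Matrix.linftyOpSemiNormedRing
  letI : NormedRing (Matrix (Fin d) (Fin d) ℝ) := Matrix.linftyOpNormedRing
  letI : NormedAlgebra ℝ (Matrix (Fin d) (Fin d) ℝ) := Matrix.linftyOpNormedAlgebra
  have hpow : ∀ n : ℕ, A ^ (n+1) = a ^ n • A := by
    intro n
    induction n with
    | zero => rw [pow_one, pow_zero, one_smul]
    | succ n ih =>
      rw [pow_succ, ih, smul_mul_assoc, h, smul_smul, ← pow_succ]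
  have hsum : Summable (fun n : ℕ => ((Nat.factorial n : ℝ))⁻¹ • A ^ n) :=
    NormedSpace.expSeries_summable' A
  rw [NormedSpace.exp_eq_tsum (𝕂 := ℝ)]
  beta_reduce
  rw [hsum.tsum_eq_zero_add]
  simp only [pow_zero, Nat.factorial_zero, Nat.cast_one, inv_one, one_smul]
  congr 1
  have : ∀ n : ℕ, ((Nat.factorial (n+1) : ℝ))⁻¹ • A ^ (n+1)
      = (((Nat.factorial (n+1) : ℝ))⁻¹ * a ^ n) • A := by
    intro n; rw [hpow, smul_smul]
  simp_rw [this]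
  rw [Summable.tsum_smul_const (sfun_summable a)]
  rfl


/-- uniqueness of equal-input embeddings — two equal-input
generators with the same matrix exponential coincide. -/
theorem stmt_5 {d : ℕ} (hd : 2 ≤ d)
    (Q Q' : Matrix (Fin d) (Fin d) ℝ)
    (hQ : IsEqualInputGen Q) (hQ' : IsEqualInputGen Q')
    (hexp : NormedSpace.exp Q = NormedSpace.exp Q') :
    Q = Q' := by
  obtain ⟨c, C, hCpos, hrows, hsums, hQdef⟩ := hQ
  obtain ⟨c', C', hCpos', hrows', hsums', hQdef'⟩ := hQ'
  have hd0 : 0 < d := by omega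
  let i0 : Fin d := ⟨0, hd0⟩
  have hc0 : 0 ≤ c := by
    rw [← hsums i0]; exact Finset.sum_nonneg fun j _ => hCpos i0 j
  have hc0' : 0 ≤ c' := by
    rw [← hsums' i0]; exact Finset.sum_nonneg fun j _ => hCpos' i0 j
  -- square identities
  have sq : ∀ (b : ℝ) (B : Matrix (Fin d) (Fin d) ℝ), (∀ i i', B i = B i') →
      (∀ i, ∑ j, B i j = b) → (B - b • 1) * (B - b • 1) = (-b) • (B - b • 1) := by
    intro b B hr hs
    have hBB : B * B = b • B := by
      ext i j
      simp only [mul_apply, Matrix.smul_apply, smul_eq_mul]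
      calc ∑ k, B i k * B k j = ∑ k, B i k * B i j := by
            refine Finset.sum_congr rfl fun k _ => ?_
            rw [show B k = B i from hr k i]
        _ = b * B i j := by rw [← Finset.sum_mul, hs i]
    rw [sub_mul, mul_sub, mul_sub, hBB]
    simp only [mul_one, one_mul, Matrix.mul_smul, Matrix.smul_mul, smul_smul, smul_sub,
      sub_smul, neg_smul, Matrix.one_mul, Matrix.mul_one]
    module
  have hQ2 : Q * Q = (-c) • Q := by rw [hQdef]; exact sq c C hrows hsums
  have hQ2' : Q' * Q' = (-c') • Q' := by rw [hQdef']; exact sq c' C' hrows' hsums'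
  -- traces
  have htr : ∀ (b : ℝ) (B : Matrix (Fin d) (Fin d) ℝ), (∀ i i', B i = B i') →
      (∀ i, ∑ j, B i j = b) → (B - b • 1).trace = b - b * d := by
    intro b B hr hs
    rw [Matrix.trace_sub, Matrix.trace_smul, Matrix.trace_one, smul_eq_mul]
    congr 1
    · rw [Matrix.trace]
      calc ∑ i, B.diag i = ∑ i, B i0 i := by
            refine Finset.sum_congr rfl fun i _ => ?_
            show B i i = B i0 i
            rw [show B i = B i0 from hr i i0]
        _ = b := hs i0
    · simp
  -- exp equation
  rw [exp_of_sq Q (-c) hQ2, exp_of_sq Q' (-c') hQ2'] at hexp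
  have hkey : sfun (-c) • Q = sfun (-c') • Q' := add_left_cancel hexp
  -- compare traces
  have htreq : (1 - Real.exp (-c)) * (1 - (d:ℝ)) = (1 - Real.exp (-c')) * (1 - (d:ℝ)) := by
    have h1 := congrArg Matrix.trace hkey
    rw [Matrix.trace_smul, Matrix.trace_smul, smul_eq_mul, smul_eq_mul, hQdef, hQdef',
      htr c C hrows hsums, htr c' C' hrows' hsums'] at h1
    have e1 : ∀ b : ℝ, sfun (-b) * (b - b * d) = (1 - Real.exp (-b)) * (1 - (d:ℝ)) := by
      intro b
      have h2 := sfun_key (-b)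
      rw [← Real.exp_eq_exp_ℝ] at h2
      nlinarith [h2]
    rw [e1 c, e1 c'] at h1
    exact h1
  have hdne : (1 : ℝ) - (d:ℝ) ≠ 0 := by
    have : (2:ℝ) ≤ (d:ℝ) := by exact_mod_cast hd
    linarith
  have hexpeq : Real.exp (-c) = Real.exp (-c') := by
    have := mul_right_cancel₀ hdne htreq
    linarith
  have hcc : c = c' := by
    have := Real.exp_injective hexpeq
    linarith
  rw [← hcc] at hkey
  -- sfun (-c) ≠ 0
  have hne : sfun (-c) ≠ 0 := by
    rcases eq_or_lt_of_le hc0 with h | h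
    · have : sfun (-c) = 1 := by
        rw [← h, neg_zero, sfun]
        rw [tsum_eq_single 0]
        · simp
        · intro n hn
          rw [zero_pow hn, mul_zero]
      rw [this]; norm_num
    · intro h0
      have h2 := sfun_key (-c)
      rw [← Real.exp_eq_exp_ℝ, h0, mul_zero] at h2
      have : Real.exp (-c) < 1 := Real.exp_lt_one_iff.mpr (by linarith)
      linarith
  exact smul_right_injective (Matrix (Fin d) (Fin d) ℝ) hne hkey
end

section
/- Let d ≥ 1. The set of monotone d×d Markov matrices is convex, and its extreme points are exactly the monotone Markov matrices all of whose entries lie in {0,1}; there are exactly binom(2d-1, d) such matrices. Equivalently, every monotone Markov matrix is a convex combination of the matrices E_{ℓ₁,…,ℓ_d} with 1 ≤ ℓ₁ ≤ ℓ₂ ≤ … ≤ ℓ_d ≤ d, where E_{ℓ₁,…,ℓ_d} is the Markov matrix whose i-th row is the standard basis vector e_{ℓ_i}. -/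
open Matrix

/-- A (row-)monotone matrix: the tail sums of the rows increase with the
row index. -/
def IsMonotone {d : ℕ} (M : Matrix (Fin d) (Fin d) ℝ) : Prop :=
  ∀ i j : Fin d, i ≤ j → ∀ m : Fin d,
    ∑ k ∈ Finset.Ici m, M i k ≤ ∑ k ∈ Finset.Ici m, M j k

/-- `E_{ℓ₁,…,ℓ_d}`: the `{0,1}` Markov matrix whose `i`-th row is the standard
basis vector `e_{ℓ i}`. -/
def Erow {d : ℕ} (ℓ : Fin d → Fin d) : Matrix (Fin d) (Fin d) ℝ :=
  Matrix.of fun i j => if j = ℓ i then 1 else 0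

namespace Stmt8

variable {d : ℕ}

/-- tail sum from natural index m -/
def tS (M : Matrix (Fin d) (Fin d) ℝ) (i : Fin d) (m : ℕ) : ℝ :=
  ∑ k ∈ Finset.univ.filter (fun k : Fin d => m ≤ (k : ℕ)), M i k

lemma tS_Ici (M : Matrix (Fin d) (Fin d) ℝ) (i m : Fin d) :
    ∑ k ∈ Finset.Ici m, M i k = tS M i (m : ℕ) := by
  unfold tS; congr 1; ext k
  simp only [Finset.mem_Ici, Finset.mem_filter, Finset.mem_univ, true_and, Fin.le_def]

lemma tS_zero (M : Matrix (Fin d) (Fin d) ℝ) (i : Fin d) : tS M i 0 = ∑ j, M i j := by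
  simp [tS]

lemma tS_of_ge (M : Matrix (Fin d) (Fin d) ℝ) (i : Fin d) {m : ℕ} (h : d ≤ m) :
    tS M i m = 0 := by
  unfold tS
  rw [Finset.filter_false_of_mem, Finset.sum_empty]
  intro k _
  have := k.2
  omega

lemma tS_smul_add (a b : ℝ) (A B : Matrix (Fin d) (Fin d) ℝ) (i : Fin d) (m : ℕ) :
    tS (a • A + b • B) i m = a * tS A i m + b * tS B i m := by
  simp [tS, Matrix.add_apply, Matrix.smul_apply, smul_eq_mul, Finset.sum_add_distrib,
    Finset.mul_sum]

lemma tS_antitone {M : Matrix (Fin d) (Fin d) ℝ} (hM : ∀ i j, 0 ≤ M i j) (i : Fin d) :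
    Antitone (tS M i) := by
  intro m m' h
  apply Finset.sum_le_sum_of_subset_of_nonneg
  · intro k hk
    simp only [Finset.mem_filter, Finset.mem_univ, true_and] at hk ⊢
    omega
  · intro k _ _; exact hM i k

lemma tS_nonneg {M : Matrix (Fin d) (Fin d) ℝ} (hM : ∀ i j, 0 ≤ M i j) (i : Fin d) (m : ℕ) :
    0 ≤ tS M i m :=
  Finset.sum_nonneg fun k _ => hM i k

lemma tS_le_one {M : Matrix (Fin d) (Fin d) ℝ} (hM : IsMarkov M) (i : Fin d) (m : ℕ) :
    tS M i m ≤ 1 := by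
  have := tS_antitone hM.1 i (Nat.zero_le m)
  rw [tS_zero, hM.2 i] at this
  exact this

lemma entry_eq_tS (M : Matrix (Fin d) (Fin d) ℝ) (i j : Fin d) :
    M i j = tS M i (j : ℕ) - tS M i ((j : ℕ) + 1) := by
  have h : Finset.univ.filter (fun k : Fin d => (j : ℕ) ≤ (k : ℕ))
      = insert j (Finset.univ.filter (fun k : Fin d => (j : ℕ) + 1 ≤ (k : ℕ))) := by
    ext k
    simp only [Finset.mem_filter, Finset.mem_univ, true_and, Finset.mem_insert, Fin.ext_iff]
    omega
  unfold tS
  rw [h, Finset.sum_insert (by simp)]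
  ring

lemma tS_Erow (ℓ : Fin d → Fin d) (i : Fin d) (m : ℕ) :
    tS (Erow ℓ) i m = if m ≤ (ℓ i : ℕ) then 1 else 0 := by
  unfold tS Erow
  simp only [Matrix.of_apply]
  rw [Finset.sum_ite_eq' _ (ℓ i) (fun _ => (1 : ℝ))]
  simp

lemma erow_markov (ℓ : Fin d → Fin d) : IsMarkov (Erow ℓ) := by
  constructor
  · intro i j; unfold Erow; dsimp; split <;> norm_num
  · intro i
    unfold Erow
    simp only [Matrix.of_apply]
    rw [Finset.sum_ite_eq' _ (ℓ i) (fun _ => (1 : ℝ))]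
    simp

lemma erow_monotone {ℓ : Fin d → Fin d} (hℓ : Monotone ℓ) : IsMonotone (Erow ℓ) := by
  intro i j hij m
  rw [tS_Ici, tS_Ici, tS_Erow, tS_Erow]
  have h : (ℓ i : ℕ) ≤ (ℓ j : ℕ) := hℓ hij
  split_ifs with h1 h2
  · exact le_refl 1
  · omega
  · norm_num
  · exact le_refl 0


noncomputable def ltop (hd : 0 < d) (M : Matrix (Fin d) (Fin d) ℝ) (i : Fin d) : Fin d :=
  if h : (Finset.univ.filter (fun m : Fin d => tS M i (m : ℕ) = 1)).Nonempty
  then (Finset.univ.filter (fun m : Fin d => tS M i (m : ℕ) = 1)).max' h else ⟨0, hd⟩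

lemma filter_nonempty (hd : 0 < d) {M : Matrix (Fin d) (Fin d) ℝ} (hM : IsMarkov M) (i : Fin d) :
    (Finset.univ.filter (fun m : Fin d => tS M i (m : ℕ) = 1)).Nonempty := by
  refine ⟨⟨0, hd⟩, ?_⟩
  simp only [Finset.mem_filter, Finset.mem_univ, true_and]
  show tS M i 0 = 1
  rw [tS_zero, hM.2 i]

lemma tS_eq_one_iff (hd : 0 < d) {M : Matrix (Fin d) (Fin d) ℝ} (hM : IsMarkov M) (i : Fin d)
    (m : ℕ) : tS M i m = 1 ↔ m ≤ (ltop hd M i : ℕ) := by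
  have hne := filter_nonempty hd hM i
  have hl : ltop hd M i = (Finset.univ.filter (fun m : Fin d => tS M i (m : ℕ) = 1)).max' hne := by
    unfold ltop; rw [dif_pos hne]
  have hmem : tS M i ((ltop hd M i : Fin d) : ℕ) = 1 := by
    have := Finset.max'_mem _ hne
    rw [← hl] at this
    simpa using this
  constructor
  · intro h1
    by_cases hlt : m < d
    · have : (⟨m, hlt⟩ : Fin d) ∈ Finset.univ.filter (fun m : Fin d => tS M i (m : ℕ) = 1) := by
        simpa using h1
      have := Finset.le_max' _ _ this
      rw [← hl] at this
      exact this
    · exfalso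
      rw [tS_of_ge M i (by omega)] at h1
      norm_num at h1
  · intro h
    have h1 : tS M i m ≤ 1 := tS_le_one hM i m
    have h2 : tS M i ((ltop hd M i : ℕ)) ≤ tS M i m := tS_antitone hM.1 i h
    rw [hmem] at h2
    linarith

lemma ltop_monotone (hd : 0 < d) {M : Matrix (Fin d) (Fin d) ℝ} (hM : IsMarkov M)
    (hm : IsMonotone M) : Monotone (ltop hd M) := by
  intro i j hij
  have h1 : tS M i ((ltop hd M i : ℕ)) = 1 := (tS_eq_one_iff hd hM i _).2 le_rfl
  have h2 : tS M i ((ltop hd M i : ℕ)) ≤ tS M j ((ltop hd M i : ℕ)) := by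
    rw [← tS_Ici, ← tS_Ici]; exact hm i j hij _
  have h3 : tS M j ((ltop hd M i : ℕ)) ≤ 1 := tS_le_one hM j _
  have h4 : tS M j ((ltop hd M i : ℕ)) = 1 := by linarith
  have := (tS_eq_one_iff hd hM j _).1 h4
  exact this

lemma eq_erow (hd : 0 < d) {M : Matrix (Fin d) (Fin d) ℝ} (hM : IsMarkov M)
    (h01 : ∀ (i : Fin d) (m : ℕ), tS M i m = 0 ∨ tS M i m = 1) :
    M = Erow (ltop hd M) := by
  have key : ∀ (i : Fin d) (m : ℕ), tS M i m = tS (Erow (ltop hd M)) i m := by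
    intro i m
    rw [tS_Erow]
    rcases h01 i m with h | h
    · rw [h]
      rw [if_neg]
      intro hc
      have := (tS_eq_one_iff hd hM i m).2 hc
      rw [h] at this; norm_num at this
    · rw [h, if_pos ((tS_eq_one_iff hd hM i m).1 h)]
  ext i j
  rw [entry_eq_tS M i j, entry_eq_tS (Erow (ltop hd M)) i j, key, key]


open scoped Classical in
lemma frac_empty_case (hd : 0 < d) {M : Matrix (Fin d) (Fin d) ℝ} (hM : IsMarkov M)
    (hm : IsMonotone M)
    (h : ∀ (i : Fin d) (m : Fin d), tS M i (m : ℕ) = 0 ∨ tS M i (m : ℕ) = 1) :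
    M ∈ convexHull ℝ (Erow '' {ℓ : Fin d → Fin d | Monotone ℓ}) := by
  have h' : ∀ (i : Fin d) (m : ℕ), tS M i m = 0 ∨ tS M i m = 1 := by
    intro i m
    by_cases hlt : m < d
    · exact h i ⟨m, hlt⟩
    · left; exact tS_of_ge M i (by omega)
  rw [eq_erow hd hM h']
  exact subset_convexHull ℝ _ ⟨ltop hd M, ltop_monotone hd hM hm, rfl⟩

open scoped Classical in
lemma mem_hull (hd : 0 < d) :
    ∀ (n : ℕ) (M : Matrix (Fin d) (Fin d) ℝ), IsMarkov M → IsMonotone M →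
    ((Finset.univ.image (fun p : Fin d × Fin d => tS M p.1 (p.2 : ℕ))).filter
       (fun x => x ≠ 0 ∧ x ≠ 1)).card ≤ n →
    M ∈ convexHull ℝ (Erow '' {ℓ : Fin d → Fin d | Monotone ℓ}) := by
  intro n
  induction n with
  | zero =>
    intro M hM hm hcard
    apply frac_empty_case hd hM hm
    intro i m
    by_contra hc
    push_neg at hc
    have hmem : tS M i (m : ℕ) ∈ (Finset.univ.image
        (fun p : Fin d × Fin d => tS M p.1 (p.2 : ℕ))).filter (fun x => x ≠ 0 ∧ x ≠ 1) := by
      rw [Finset.mem_filter]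
      exact ⟨Finset.mem_image.2 ⟨(i, m), Finset.mem_univ _, rfl⟩, hc⟩
    have := Finset.card_pos.2 ⟨_, hmem⟩
    omega
  | succ n ih =>
    intro M hM hm hcard
    set V := (Finset.univ.image (fun p : Fin d × Fin d => tS M p.1 (p.2 : ℕ))).filter
       (fun x => x ≠ 0 ∧ x ≠ 1) with hV
    by_cases hVne : V.Nonempty
    swap
    · exact ih M hM hm (by rw [Finset.not_nonempty_iff_eq_empty] at hVne; rw [← hV, hVne]; simp)
    set c := V.max' hVne with hc
    have hcV : c ∈ V := V.max'_mem hVne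
    obtain ⟨hcim, hc0', hc1'⟩ := Finset.mem_filter.1 hcV
    obtain ⟨p, -, hp⟩ := Finset.mem_image.1 hcim
    have hc0 : 0 < c := by
      have := tS_nonneg hM.1 p.1 (p.2 : ℕ)
      rw [hp] at this
      exact lt_of_le_of_ne this (Ne.symm hc0')
    have hc1 : c < 1 := by
      have := tS_le_one hM p.1 (p.2 : ℕ)
      rw [hp] at this
      exact lt_of_le_of_ne this hc1'
    have hub : ∀ (i : Fin d) (m : ℕ), tS M i m = 1 ∨ tS M i m ≤ c := by
      intro i m
      by_cases h1 : tS M i m = 1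
      · exact Or.inl h1
      right
      by_cases hlt : m < d
      · by_cases h0 : tS M i m = 0
        · rw [h0]; exact hc0.le
        · apply Finset.le_max'
          rw [Finset.mem_filter]
          exact ⟨Finset.mem_image.2 ⟨(i, ⟨m, hlt⟩), Finset.mem_univ _, rfl⟩, h0, h1⟩
      · rw [tS_of_ge M i (by omega)]; exact hc0.le
    set ℓ := ltop hd M with hℓ
    set E := Erow ℓ with hE
    set M' := c⁻¹ • M + (-((1 - c) / c)) • E with hM'def
    have hS' : ∀ (i : Fin d) (m : ℕ),
        tS M' i m = if tS M i m = 1 then 1 else tS M i m / c := by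
      intro i m
      rw [hM'def, tS_smul_add, tS_Erow]
      by_cases h1 : tS M i m = 1
      · rw [if_pos ((tS_eq_one_iff hd hM i m).1 h1), if_pos h1, h1]
        field_simp
        ring
      · rw [if_neg (fun hc' => h1 ((tS_eq_one_iff hd hM i m).2 hc')), if_neg h1]
        ring
    have hmono2 : ∀ x y : ℝ, (x = 1 ∨ x ≤ c) → (y = 1 ∨ y ≤ c) → x ≤ y →
        (if x = 1 then 1 else x / c) ≤ (if y = 1 then 1 else y / c) := by
      intro x y hx hy hxy
      by_cases hx1 : x = 1
      · have hy1 : y = 1 := by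
          rcases hy with h | h
          · exact h
          · linarith [hx1 ▸ hxy]
        rw [if_pos hx1, if_pos hy1]
      · rw [if_neg hx1]
        by_cases hy1 : y = 1
        · rw [if_pos hy1]
          rcases hx with h | h
          · exact absurd h hx1
          · rw [div_le_one hc0]; linarith
        · rw [if_neg hy1]
          gcongr
    have hM'markov : IsMarkov M' := by
      constructor
      · intro i j
        rw [entry_eq_tS M' i j, hS', hS']
        have := tS_antitone hM.1 i (Nat.le_succ (j : ℕ))
        linarith [hmono2 _ _ (hub i ((j : ℕ) + 1)) (hub i (j : ℕ)) this]
      · intro i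
        rw [← tS_zero, hS']
        rw [if_pos]
        rw [tS_zero, hM.2 i]
    have hM'mono : IsMonotone M' := by
      intro i j hij m
      rw [tS_Ici, tS_Ici, hS', hS']
      apply hmono2 _ _ (hub i (m : ℕ)) (hub j (m : ℕ))
      rw [← tS_Ici, ← tS_Ici]
      exact hm i j hij m
    have hcard' : ((Finset.univ.image (fun p : Fin d × Fin d => tS M' p.1 (p.2 : ℕ))).filter
        (fun x => x ≠ 0 ∧ x ≠ 1)).card ≤ n := by
      have hsub : ((Finset.univ.image (fun p : Fin d × Fin d => tS M' p.1 (p.2 : ℕ))).filter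
          (fun x => x ≠ 0 ∧ x ≠ 1)) ⊆ (V.erase c).image (fun x => x / c) := by
        intro x hx
        obtain ⟨hxim, hx0, hx1⟩ := Finset.mem_filter.1 hx
        obtain ⟨q, -, hq⟩ := Finset.mem_image.1 hxim
        rw [hS'] at hq
        by_cases hy1 : tS M q.1 (q.2 : ℕ) = 1
        · rw [if_pos hy1] at hq; exact absurd hq.symm hx1
        rw [if_neg hy1] at hq
        have hy0 : tS M q.1 (q.2 : ℕ) ≠ 0 := by
          intro h0; rw [h0] at hq; rw [zero_div] at hq; exact hx0 hq.symm
        have hyc : tS M q.1 (q.2 : ℕ) ≠ c := by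
          intro hec; rw [hec, div_self hc0.ne'] at hq; exact hx1 hq.symm
        apply Finset.mem_image.2
        refine ⟨tS M q.1 (q.2 : ℕ), Finset.mem_erase.2 ⟨hyc, ?_⟩, hq⟩
        rw [hV, Finset.mem_filter]
        exact ⟨Finset.mem_image.2 ⟨q, Finset.mem_univ _, rfl⟩, hy0, hy1⟩
      calc ((Finset.univ.image (fun p : Fin d × Fin d => tS M' p.1 (p.2 : ℕ))).filter
              (fun x => x ≠ 0 ∧ x ≠ 1)).card
          ≤ ((V.erase c).image (fun x => x / c)).card := Finset.card_le_card hsub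
        _ ≤ (V.erase c).card := Finset.card_image_le
        _ = V.card - 1 := Finset.card_erase_of_mem hcV
        _ ≤ n := by omega
    have hM'hull := ih M' hM'markov hM'mono hcard'
    have hEhull : E ∈ convexHull ℝ (Erow '' {ℓ : Fin d → Fin d | Monotone ℓ}) :=
      subset_convexHull ℝ _ ⟨ℓ, ltop_monotone hd hM hm, rfl⟩
    have hMeq : M = (1 - c) • E + c • M' := by
      rw [hM'def]
      ext i j
      simp only [Matrix.add_apply, Matrix.smul_apply, smul_eq_mul]
      field_simp
      ring
    rw [hMeq]
    exact (convex_convexHull ℝ _) hEhull hM'hull (by linarith) hc0.le (by ring)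


lemma set_convex : Convex ℝ {M : Matrix (Fin d) (Fin d) ℝ | IsMarkov M ∧ IsMonotone M} := by
  rintro x ⟨hx1, hx2⟩ y ⟨hy1, hy2⟩ a b ha hb hab
  refine ⟨⟨fun i j => ?_, fun i => ?_⟩, fun i j hij m => ?_⟩
  · simp only [Matrix.add_apply, Matrix.smul_apply, smul_eq_mul]
    have := hx1.1 i j; have := hy1.1 i j
    positivity
  · simp only [Matrix.add_apply, Matrix.smul_apply, smul_eq_mul]
    rw [Finset.sum_add_distrib, ← Finset.mul_sum, ← Finset.mul_sum, hx1.2 i, hy1.2 i]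
    linarith
  · simp only [Matrix.add_apply, Matrix.smul_apply, smul_eq_mul]
    rw [Finset.sum_add_distrib, Finset.sum_add_distrib, ← Finset.mul_sum, ← Finset.mul_sum,
      ← Finset.mul_sum, ← Finset.mul_sum]
    have h1 := hx2 i j hij m
    have h2 := hy2 i j hij m
    nlinarith

lemma erow_01 (ℓ : Fin d → Fin d) : ∀ i j, Erow ℓ i j = 0 ∨ Erow ℓ i j = 1 := by
  intro i j
  unfold Erow
  dsimp
  split
  · right; rfl
  · left; rfl

lemma zeroone_eq_image (hd : 0 < d) :
    {M : Matrix (Fin d) (Fin d) ℝ |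
        (IsMarkov M ∧ IsMonotone M) ∧ ∀ i j, M i j = 0 ∨ M i j = 1}
      = Erow '' {ℓ : Fin d → Fin d | Monotone ℓ} := by
  ext M
  constructor
  · rintro ⟨⟨hM, hm⟩, h01⟩
    have h01' : ∀ (i : Fin d) (m : ℕ), tS M i m = 0 ∨ tS M i m = 1 := by
      intro i m
      by_cases hex : ∃ k ∈ Finset.univ.filter (fun k : Fin d => m ≤ (k : ℕ)), M i k = 1
      · obtain ⟨k, hk, hk1⟩ := hex
        right
        have hle : (1 : ℝ) ≤ tS M i m := by
          rw [← hk1]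
          exact Finset.single_le_sum (fun k _ => hM.1 i k) hk
        have := tS_le_one hM i m
        linarith
      · left
        push_neg at hex
        apply Finset.sum_eq_zero
        intro k hk
        rcases h01 i k with h | h
        · exact h
        · exact absurd h (hex k hk)
    refine ⟨ltop hd M, ltop_monotone hd hM hm, (eq_erow hd hM h01').symm⟩
  · rintro ⟨ℓ, hℓ, rfl⟩
    exact ⟨⟨erow_markov ℓ, erow_monotone hℓ⟩, erow_01 ℓ⟩

lemma entry_le_one {M : Matrix (Fin d) (Fin d) ℝ} (hM : IsMarkov M) (i j : Fin d) :
    M i j ≤ 1 := by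
  rw [← hM.2 i]
  exact Finset.single_le_sum (fun k _ => hM.1 i k) (Finset.mem_univ j)

lemma extreme_of_01 {M : Matrix (Fin d) (Fin d) ℝ} (h1 : IsMarkov M) (h2 : IsMonotone M)
    (h01 : ∀ i j, M i j = 0 ∨ M i j = 1) :
    M ∈ Set.extremePoints ℝ {M : Matrix (Fin d) (Fin d) ℝ | IsMarkov M ∧ IsMonotone M} := by
  refine ⟨⟨h1, h2⟩, ?_⟩
  rintro x ⟨hx1, -⟩ y ⟨hy1, -⟩ hseg
  obtain ⟨a, b, ha, hb, hab, hxy⟩ := hseg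
  have hzero : ∀ i k, M i k = 0 → x i k = 0 ∧ y i k = 0 := by
    intro i k h0
    have he : a * x i k + b * y i k = M i k := by
      have := congrFun (congrFun hxy i) k
      simpa [Matrix.add_apply, Matrix.smul_apply, smul_eq_mul] using this
    rw [h0] at he
    have hx0 := hx1.1 i k
    have hy0 := hy1.1 i k
    constructor
    · nlinarith
    · nlinarith
  have key : ∀ z : Matrix (Fin d) (Fin d) ℝ, IsMarkov z →
      (∀ i k, M i k = 0 → z i k = 0) → z = M := by
    intro z hz hz0
    ext i j
    rcases h01 i j with h | h
    · rw [h, hz0 i j h]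
    · rw [h]
      have hrow := hz.2 i
      have hrowM := h1.2 i
      have herM : ∑ k ∈ Finset.univ.erase j, M i k = 0 := by
        have := Finset.sum_erase_add Finset.univ (M i) (Finset.mem_univ j)
        rw [h] at this
        linarith [this.symm ▸ hrowM]
      have hallM : ∀ k ∈ Finset.univ.erase j, M i k = 0 := by
        intro k hk
        have := (Finset.sum_eq_zero_iff_of_nonneg (fun k _ => h1.1 i k)).1 herM
        exact this k hk
      have herz : ∑ k ∈ Finset.univ.erase j, z i k = 0 :=
        Finset.sum_eq_zero fun k hk => hz0 i k (hallM k hk)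
      have := Finset.sum_erase_add Finset.univ (z i) (Finset.mem_univ j)
      rw [herz] at this
      rw [hrow] at this
      linarith
  exact key x hx1 (fun i k h => (hzero i k h).1)

lemma erow_injective : Function.Injective (Erow (d := d)) := by
  intro ℓ ℓ' h
  funext i
  have := congrFun (congrFun h i) (ℓ i)
  unfold Erow at this
  simp only [Matrix.of_apply, if_pos rfl] at this
  by_contra hne
  rw [if_neg (fun hc : ℓ i = ℓ' i => hne hc)] at this
  norm_num at this


noncomputable def monoEquivSym (d : ℕ) : {ℓ : Fin d → Fin d // Monotone ℓ} ≃ Sym (Fin d) d where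
  toFun ℓ := ⟨Multiset.map ℓ.1 Finset.univ.val, by simp⟩
  invFun s := ⟨fun i => (Multiset.sort s.1 (· ≤ ·)).get
      ⟨i.1, by rw [Multiset.length_sort, s.2]; exact i.2⟩, by
    intro i j hij
    exact (Multiset.pairwise_sort s.1 (· ≤ ·)).rel_get_of_le (Fin.mk_le_mk.2 hij)⟩
  left_inv := by
    rintro ⟨ℓ, hℓ⟩
    apply Subtype.ext
    funext i
    dsimp only
    have h1 : Multiset.map ℓ Finset.univ.val = ↑(List.ofFn ℓ) := Fin.univ_val_map ℓ
    have h2 : Multiset.sort (↑(List.ofFn ℓ) : Multiset (Fin d)) (· ≤ ·) = List.ofFn ℓ :=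
      List.Perm.eq_of_pairwise' (r := (· ≤ ·))
        (Multiset.pairwise_sort _ _) (List.pairwise_ofFn.2 (fun _ _ h => hℓ h.le))
        (Multiset.coe_eq_coe.1 (Multiset.sort_eq _ _))
    have h3 : Multiset.sort (Multiset.map ℓ Finset.univ.val) (· ≤ ·) = List.ofFn ℓ := by
      rw [h1, h2]
    rw [List.get_of_eq h3]
    rw [List.get_ofFn]
    congr 1
  right_inv := by
    rintro ⟨m, hm⟩
    apply Subtype.ext
    dsimp only
    rw [Fin.univ_val_map]
    have h4 : List.ofFn (fun i : Fin d => (Multiset.sort m (· ≤ ·)).get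
        ⟨i.1, by rw [Multiset.length_sort, hm]; exact i.2⟩) = Multiset.sort m (· ≤ ·) := by
      apply List.ext_get
      · simp [hm]
      · intro n h1' h2'
        simp [List.get_ofFn]
    rw [h4]
    exact Multiset.sort_eq _ _

lemma count_monotone (d : ℕ) :
    {ℓ : Fin d → Fin d | Monotone ℓ}.ncard = Nat.choose (2 * d - 1) d := by
  rw [← Nat.card_coe_set_eq]
  have : Nat.card {ℓ : Fin d → Fin d | Monotone ℓ} = Nat.card (Sym (Fin d) d) :=
    Nat.card_congr (monoEquivSym d)
  rw [this, Nat.card_eq_fintype_card, Sym.card_sym_eq_choose, Fintype.card_fin, two_mul]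

end Stmt8

/-- the set of monotone Markov matrices is convex, its extreme
points are exactly the monotone `{0,1}` Markov matrices, there are exactly
`binom(2d-1,d)` of these, and the whole set is the convex hull of the matrices
`E_ℓ` for monotone `ℓ`. -/
theorem stmt_8 {d : ℕ} (hd : 1 ≤ d) :
    Convex ℝ {M : Matrix (Fin d) (Fin d) ℝ | IsMarkov M ∧ IsMonotone M} ∧
    Set.extremePoints ℝ {M : Matrix (Fin d) (Fin d) ℝ | IsMarkov M ∧ IsMonotone M}
      = {M : Matrix (Fin d) (Fin d) ℝ |
          (IsMarkov M ∧ IsMonotone M) ∧ ∀ i j, M i j = 0 ∨ M i j = 1} ∧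
    {M : Matrix (Fin d) (Fin d) ℝ |
        (IsMarkov M ∧ IsMonotone M) ∧ ∀ i j, M i j = 0 ∨ M i j = 1}.ncard
      = Nat.choose (2 * d - 1) d ∧
    {M : Matrix (Fin d) (Fin d) ℝ |
        (IsMarkov M ∧ IsMonotone M) ∧ ∀ i j, M i j = 0 ∨ M i j = 1}
      = Erow '' {ℓ : Fin d → Fin d | Monotone ℓ} ∧
    {M : Matrix (Fin d) (Fin d) ℝ | IsMarkov M ∧ IsMonotone M}
      = convexHull ℝ (Erow '' {ℓ : Fin d → Fin d | Monotone ℓ}) := by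
  classical
  have hd0 : 0 < d := hd
  have h5 : {M : Matrix (Fin d) (Fin d) ℝ | IsMarkov M ∧ IsMonotone M}
      = convexHull ℝ (Erow '' {ℓ : Fin d → Fin d | Monotone ℓ}) := by
    apply Set.Subset.antisymm
    · rintro M ⟨hM, hm⟩
      exact Stmt8.mem_hull hd0 _ M hM hm le_rfl
    · apply convexHull_min _ Stmt8.set_convex
      rintro _ ⟨ℓ, hℓ, rfl⟩
      exact ⟨Stmt8.erow_markov ℓ, Stmt8.erow_monotone hℓ⟩
  have h4 := Stmt8.zeroone_eq_image (d := d) hd0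
  refine ⟨Stmt8.set_convex, ?_, ?_, h4, h5⟩
  · apply Set.Subset.antisymm
    · rw [h5, h4]
      exact extremePoints_convexHull_subset
    · rintro M ⟨⟨hM, hm⟩, h01⟩
      exact Stmt8.extreme_of_01 hM hm h01
  · rw [h4, Set.ncard_image_of_injective _ Stmt8.erow_injective]
    exact Stmt8.count_monotone d
end

section
/- A 2×2 Markov matrix M is monotone if and only if trace(M) ≥ 1. Consequently, a 2×2 Markov matrix is monotone if and only if it is either embeddable or a non-trivial idempotent (i.e. M² = M with M ≠ I). -/
open Matrix

/-- A Markov generator: nonnegative off-diagonal entries, zero row sums. -/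
def IsGenerator {d : ℕ} (Q : Matrix (Fin d) (Fin d) ℝ) : Prop :=
  (∀ i j, i ≠ j → 0 ≤ Q i j) ∧ ∀ i, ∑ j, Q i j = 0

/-- An embeddable Markov matrix: the exponential of a Markov generator. -/
def IsEmbeddable {d : ℕ} (M : Matrix (Fin d) (Fin d) ℝ) : Prop :=
  ∃ Q : Matrix (Fin d) (Fin d) ℝ, IsGenerator Q ∧ NormedSpace.exp Q = M

attribute [local instance] Matrix.linftyOpNormedRing Matrix.linftyOpNormedAlgebra

lemma exp_quad (N : Matrix (Fin 2) (Fin 2) ℝ) (μ : ℝ) (hμ : μ ≠ 0)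
    (h : N * N = μ • N) :
    NormedSpace.exp N = 1 + ((Real.exp μ - 1) / μ) • N := by
  have hpow : ∀ n : ℕ, N ^ (n + 1) = μ ^ n • N := by
    intro n
    induction n with
    | zero => simp
    | succ n ih =>
        rw [pow_succ, ih, smul_mul_assoc, h, smul_smul, pow_succ]
  have hsum1 : Summable (fun n : ℕ => μ ^ (n + 1) / (Nat.factorial (n + 1))) :=
    (Real.summable_pow_div_factorial μ).comp_injective Nat.succ_injective
  have hS : Summable (fun n : ℕ => ((Nat.factorial (n + 1)) : ℝ)⁻¹ * μ ^ n) := by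
    have h2 := hsum1.mul_left μ⁻¹
    apply h2.congr
    intro n
    field_simp
    ring
  have hexp : Real.exp μ = ∑' n : ℕ, μ ^ n / (Nat.factorial n) := by
    rw [Real.exp_eq_exp_ℝ, NormedSpace.exp_eq_tsum_div]
  have hshift : (∑' n : ℕ, μ ^ n / (Nat.factorial n)) = 1 + ∑' n : ℕ, μ ^ (n + 1) / (Nat.factorial (n + 1)) := by
    rw [Summable.tsum_eq_zero_add (Real.summable_pow_div_factorial μ)]
    norm_num
  have hval : (∑' n : ℕ, ((Nat.factorial (n + 1)) : ℝ)⁻¹ * μ ^ n) = (Real.exp μ - 1) / μ := by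
    have h3 : (∑' n : ℕ, μ ^ (n + 1) / (Nat.factorial (n + 1))) = Real.exp μ - 1 := by
      rw [hexp, hshift]; ring
    have h4 : (∑' n : ℕ, ((Nat.factorial (n + 1)) : ℝ)⁻¹ * μ ^ n) = μ⁻¹ * ∑' n : ℕ, μ ^ (n + 1) / (Nat.factorial (n + 1)) := by
      rw [← tsum_mul_left]
      congr 1; funext n; field_simp; ring
    rw [h4, h3]; field_simp
  rw [NormedSpace.exp_eq_tsum (𝕂 := ℝ)]
  beta_reduce
  rw [Summable.tsum_eq_zero_add (by exact NormedSpace.expSeries_summable' (𝕂 := ℝ) N)]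
  congr 1
  · norm_num
  · have : (fun n : ℕ => ((Nat.factorial (n + 1)) : ℝ)⁻¹ • N ^ (n + 1))
        = fun n : ℕ => (((Nat.factorial (n + 1)) : ℝ)⁻¹ * μ ^ n) • N := by
      funext n; rw [hpow n, smul_smul]
    rw [this, Summable.tsum_smul_const hS, hval]


/-- a `2×2` Markov matrix is monotone iff its trace is `≥ 1`,
iff it is embeddable or a non-trivial idempotent. -/
theorem stmt_10 (M : Matrix (Fin 2) (Fin 2) ℝ) (hM : IsMarkov M) :
    (IsMonotone M ↔ 1 ≤ Matrix.trace M) ∧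
    (IsMonotone M ↔ (IsEmbeddable M ∨ (M * M = M ∧ M ≠ 1))) := by
  obtain ⟨hpos, hrow⟩ := hM
  have hFin : ∀ i : Fin 2, i = 0 ∨ i = 1 := by decide
  have hr0 : M 0 0 + M 0 1 = 1 := by simpa [Fin.sum_univ_two] using hrow 0
  have hr1 : M 1 0 + M 1 1 = 1 := by simpa [Fin.sum_univ_two] using hrow 1
  have hb : M 0 1 = 1 - M 0 0 := by linarith
  have hd : M 1 1 = 1 - M 1 0 := by linarith
  have hIci0 : Finset.Ici (0 : Fin 2) = Finset.univ := by decide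
  have hIci1 : Finset.Ici (1 : Fin 2) = {1} := by decide
  have htr : Matrix.trace M = M 0 0 + M 1 1 := Matrix.trace_fin_two M
  -- Part 1
  have part1 : IsMonotone M ↔ 1 ≤ Matrix.trace M := by
    constructor
    · intro h
      have := h 0 1 (by decide) 1
      rw [hIci1, Finset.sum_singleton, Finset.sum_singleton] at this
      rw [htr]; linarith
    · intro ht i j hij m
      rw [htr] at ht
      rcases hFin i with rfl | rfl <;> rcases hFin j with rfl | rfl <;>
        rcases hFin m with rfl | rfl <;>
        first
        | exact le_refl _
        | exact absurd hij (by decide)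
        | (rw [hIci0, hrow 0, hrow 1])
        | (rw [hIci1, Finset.sum_singleton, Finset.sum_singleton]; linarith)
  refine ⟨part1, part1.trans ?_⟩
  constructor
  · -- 1 ≤ trace → embeddable or nontrivial idempotent
    intro ht
    rw [htr] at ht
    set D := M 0 0 - M 1 0 with hD
    have hD0 : 0 ≤ D := by simp only [hD]; linarith
    have hD1 : D ≤ 1 := by
      have := hpos 0 1; have := hpos 1 0; simp only [hD]; linarith
    rcases eq_or_lt_of_le hD0 with hDz | hDpos
    · -- D = 0 : idempotent
      right
      have hac : M 1 0 = M 0 0 := by simp only [hD] at hDz; linarith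
      constructor
      · ext i j
        rcases hFin i with rfl | rfl <;> rcases hFin j with rfl | rfl <;>
          simp only [Matrix.mul_apply, Fin.sum_univ_two] <;>
          simp only [hb, hd, hac] <;> ring
      · intro hM1
        have : Matrix.trace M = 2 := by
          rw [hM1]; simp [Matrix.trace_one]
        rw [htr] at this
        simp only [hD] at hDz
        have h11 : M 1 1 = 1 - M 1 0 := by linarith
        nlinarith [hpos 1 0]
    · rcases eq_or_lt_of_le hD1 with hDone | hDlt
      · -- D = 1 : M = 1, embeddable via Q = 0
        left
        have h00 : M 0 0 = 1 := by
          have := hpos 0 1; have := hpos 1 0; simp only [hD] at hDone; linarith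
        have h10 : M 1 0 = 0 := by simp only [hD] at hDone; linarith
        refine ⟨0, ⟨fun i j _ => le_refl 0, fun i => by simp⟩, ?_⟩
        rw [NormedSpace.exp_zero]
        ext i j
        rcases hFin i with rfl | rfl <;> rcases hFin j with rfl | rfl <;>
          simp [Matrix.one_apply] <;> linarith
      · -- 0 < D < 1 : embeddable
        left
        set β : ℝ := Real.log D / (D - 1) with hβ
        have hβpos : 0 < β :=
          div_pos_of_neg_of_neg (Real.log_neg hDpos hDlt) (by linarith)
        set N : Matrix (Fin 2) (Fin 2) ℝ := M - 1 with hN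
        have hNsq : N * N = (D - 1) • N := by
          ext i j
          rcases hFin i with rfl | rfl <;> rcases hFin j with rfl | rfl <;>
            simp only [hN, Matrix.mul_apply, Matrix.sub_apply, Matrix.smul_apply,
              Matrix.one_apply, Fin.sum_univ_two] <;>
            norm_num <;> simp only [hb, hd] <;> ring
        refine ⟨β • N, ⟨?_, ?_⟩, ?_⟩
        · intro i j hij
          rcases hFin i with rfl | rfl <;> rcases hFin j with rfl | rfl <;>
            first
            | exact absurd rfl hij
            | (simp only [hN, Matrix.smul_apply, Matrix.sub_apply, Matrix.one_apply]
               norm_num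
               first
               | exact mul_nonneg hβpos.le (hpos 0 1)
               | exact mul_nonneg hβpos.le (hpos 1 0)
               | nlinarith [mul_nonneg hβpos.le (hpos 0 1),
                   mul_nonneg hβpos.le (hpos 1 0)])
        · intro i
          rcases hFin i with rfl | rfl <;>
            simp only [Fin.sum_univ_two, hN, Matrix.smul_apply, Matrix.sub_apply,
              Matrix.one_apply] <;> norm_num <;> simp only [hb, hd] <;> ring
        · have hμ : β * (D - 1) ≠ 0 := by
            apply mul_ne_zero (ne_of_gt hβpos); linarith
          have hsq : (β • N) * (β • N) = (β * (D - 1)) • (β • N) := by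
            rw [smul_mul_assoc, mul_smul_comm, hNsq, smul_smul, smul_smul, smul_smul]
            ring_nf
          have hexpμ : Real.exp (β * (D - 1)) = D := by
            rw [hβ, div_mul_cancel₀ _ (by linarith : D - 1 ≠ 0)]
            exact Real.exp_log hDpos
          rw [exp_quad (β • N) (β * (D - 1)) hμ hsq, hexpμ]
          have key : ((D - 1) / (β * (D - 1))) • (β • N) = N := by
            rw [smul_smul]
            rw [show (D - 1) / (β * (D - 1)) * β = 1 by
              field_simp [show D - 1 ≠ 0 by linarith]]
            exact one_smul _ _
          rw [key, hN]
          abel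
  · -- embeddable or idempotent → 1 ≤ trace
    rintro (⟨Q, ⟨hQpos, hQrow⟩, hQexp⟩ | ⟨hMM, _⟩)
    · have hq0 : Q 0 0 + Q 0 1 = 0 := by simpa [Fin.sum_univ_two] using hQrow 0
      have hq1 : Q 1 0 + Q 1 1 = 0 := by simpa [Fin.sum_univ_two] using hQrow 1
      have hq : 0 ≤ Q 0 1 := hQpos 0 1 (by decide)
      have hqa : Q 0 0 = -Q 0 1 := by linarith
      have hqb : Q 1 1 = -Q 1 0 := by linarith
      have hr : 0 ≤ Q 1 0 := hQpos 1 0 (by decide)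
      set s : ℝ := Q 0 1 + Q 1 0 with hs
      rcases eq_or_lt_of_le (by positivity : (0:ℝ) ≤ s) with hsz | hspos
      · have hQ0 : Q = 0 := by
          ext i j
          rcases hFin i with rfl | rfl <;> rcases hFin j with rfl | rfl <;>
            simp only [Matrix.zero_apply] <;>
            simp only [hs] at hsz <;> linarith
        rw [hQ0, NormedSpace.exp_zero] at hQexp
        rw [htr, ← hQexp]
        simp [Matrix.one_apply]
      · have hsq : Q * Q = (-s) • Q := by
          ext i j
          rcases hFin i with rfl | rfl <;> rcases hFin j with rfl | rfl <;>
            simp only [Matrix.mul_apply, Matrix.smul_apply, Fin.sum_univ_two, hs,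
              smul_eq_mul] <;>
            simp only [hqa, hqb] <;> ring
        have := exp_quad Q (-s) (by linarith) hsq
        rw [this] at hQexp
        rw [htr, ← hQexp]
        simp only [Matrix.add_apply, Matrix.smul_apply, Matrix.one_apply, Fin.isValue]
        norm_num
        have hc : (Real.exp (-s) - 1) / (-s) * (Q 0 0 + Q 1 1) = Real.exp (-s) - 1 := by
          rw [show Q 0 0 + Q 1 1 = -s by simp only [hs]; linarith]
          field_simp
        nlinarith [Real.exp_pos (-s), hc]
    · have e00 := congrFun (congrFun hMM 1) 0
      have e10 := congrFun (congrFun hMM 0) 0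
      simp only [Matrix.mul_apply, Fin.sum_univ_two, Fin.isValue] at e00 e10
      rw [htr]
      rcases eq_or_ne (M 0 0 - M 1 0) 0 with hz | hnz
      · linarith
      · -- M 1 0 * (M 0 0 - M 1 0 + ...) analysis
        have h1 : M 1 0 * (M 0 0 - M 1 0) = 0 := by
          linear_combination e00 - M 1 0 * hr1
        have h2 : (1 - M 0 0) * (M 1 0 - M 0 0) = 0 := by
          linear_combination e10 - M 1 0 * hr0
        have h10 : M 1 0 = 0 := by
          rcases mul_eq_zero.1 h1 with h | h
          · exact h
          · exact absurd (by linarith) hnz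
        have h00 : M 0 0 = 1 := by
          rcases mul_eq_zero.1 h2 with h | h
          · linarith
          · exact absurd (by linarith) hnz
        linarith [hpos 1 1, h00, h10, hr1]
end

section
/- A 2×2 Markov matrix M is infinitely divisible (i.e. for every n ≥ 1 there exists a 2×2 Markov matrix R with Rⁿ = M) if and only if M is monotone (equivalently, trace(M) ≥ 1). Moreover, every monotone 2×2 Markov matrix is infinitely divisible within the monotone matrices: for every n ≥ 1 there is a monotone Markov matrix R with Rⁿ = M. -/
open Matrix

noncomputable def f2 (α β : ℝ) : Matrix (Fin 2) (Fin 2) ℝ := !![1-α, α; β, 1-β]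

lemma f2_mul (α β γ δ : ℝ) : f2 α β * f2 γ δ =
    f2 (α + γ - α*γ - α*δ) (β + δ - β*γ - β*δ) := by
  ext i j
  fin_cases i <;> fin_cases j <;>
    simp [f2, Matrix.mul_apply, Fin.sum_univ_two] <;> ring

lemma f2_pow (p q t : ℝ) (hpq : p + q = 1) (k : ℕ) :
    (f2 (p*t) (q*t)) ^ k = f2 (p*(1-(1-t)^k)) (q*(1-(1-t)^k)) := by
  induction k with
  | zero =>
    simp only [pow_zero]
    ext i j
    fin_cases i <;> fin_cases j <;> simp [f2, Matrix.one_apply]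
  | succ k ih =>
    rw [pow_succ, ih, f2_mul]
    have hq : q = 1 - p := by linarith
    have h1 : p*(1-(1-t)^k) + p*t - p*(1-(1-t)^k)*(p*t) - p*(1-(1-t)^k)*(q*t)
        = p*(1-(1-t)^(k+1)) := by subst hq; ring
    have h2 : q*(1-(1-t)^k) + q*t - q*(1-(1-t)^k)*(p*t) - q*(1-(1-t)^k)*(q*t)
        = q*(1-(1-t)^(k+1)) := by subst hq; ring
    rw [h1, h2]

lemma f2_markov {α β : ℝ} (hα0 : 0 ≤ α) (hα1 : α ≤ 1) (hβ0 : 0 ≤ β) (hβ1 : β ≤ 1) :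
    IsMarkov (f2 α β) := by
  constructor
  · intro i j; fin_cases i <;> fin_cases j <;> simp [f2] <;> linarith
  · intro i; fin_cases i <;> simp [f2, Fin.sum_univ_two]

lemma f2_mono {α β : ℝ} (h : α + β ≤ 1) : IsMonotone (f2 α β) := by
  intro i j hij m
  fin_cases i <;> fin_cases j <;> fin_cases m <;>
    simp_all [f2, Fin.sum_univ_two, show (Finset.Ici (1:Fin 2)) = {1} from by decide,
      show (Finset.Ici (0:Fin 2)) = {0,1} from by decide] <;>
    first
      | linarith
      | exact absurd hij (by decide)

lemma mono_01 {M : Matrix (Fin 2) (Fin 2) ℝ} (h : IsMonotone M) : M 0 1 ≤ M 1 1 := by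
  have := h 0 1 (by decide) 1
  simpa [show (Finset.Ici (1:Fin 2)) = {1} from by decide] using this

lemma root_exists (a b : ℝ) (ha0 : 0 ≤ a) (hb0 : 0 ≤ b) (hab : a + b ≤ 1)
    (n : ℕ) (hn : 1 ≤ n) :
    ∃ α β : ℝ, 0 ≤ α ∧ α ≤ 1 ∧ 0 ≤ β ∧ β ≤ 1 ∧ α + β ≤ 1 ∧ (f2 α β) ^ n = f2 a b := by
  by_cases h : a + b = 0
  · have ha : a = 0 := by linarith
    have hb : b = 0 := by linarith
    subst ha; subst hb
    refine ⟨0, 0, le_refl _, by norm_num, le_refl _, by norm_num, by norm_num, ?_⟩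
    have := f2_pow 1 0 0 (by norm_num) n
    simpa using this
  · have hs : 0 < a + b := lt_of_le_of_ne (by linarith) (Ne.symm h)
    set lam : ℝ := 1 - (a + b) with hlam
    have hlam0 : 0 ≤ lam := by linarith
    set mu : ℝ := lam ^ ((n:ℝ)⁻¹) with hmu
    have hmu0 : 0 ≤ mu := Real.rpow_nonneg hlam0 _
    have hmu1 : mu ≤ 1 := Real.rpow_le_one hlam0 (by linarith) (by positivity)
    have hmun : mu ^ n = lam := by
      rw [hmu, ← Real.rpow_natCast (lam ^ ((n:ℝ)⁻¹)) n, ← Real.rpow_mul hlam0]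
      have hn' : (n:ℝ) ≠ 0 := by positivity
      rw [inv_mul_cancel₀ hn']
      exact Real.rpow_one lam
    set p : ℝ := a / (a + b) with hp
    set q : ℝ := b / (a + b) with hq
    have hpq : p + q = 1 := by rw [hp, hq, ← add_div, div_self (ne_of_gt hs)]
    have hp0 : 0 ≤ p := by positivity
    have hq0 : 0 ≤ q := by positivity
    have hp1 : p ≤ 1 := by rw [hp, div_le_one hs]; linarith
    have hq1 : q ≤ 1 := by rw [hq, div_le_one hs]; linarith
    set t : ℝ := 1 - mu with ht
    have ht0 : 0 ≤ t := by linarith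
    have ht1 : t ≤ 1 := by linarith
    refine ⟨p*t, q*t, by positivity, ?_, by positivity, ?_, ?_, ?_⟩
    · calc p*t ≤ 1*1 := by apply mul_le_mul hp1 ht1 ht0 (by norm_num)
        _ = 1 := by norm_num
    · calc q*t ≤ 1*1 := by apply mul_le_mul hq1 ht1 ht0 (by norm_num)
        _ = 1 := by norm_num
    · have : p*t + q*t = t := by rw [← add_mul, hpq, one_mul]
      linarith
    · rw [f2_pow p q t hpq n]
      have h1t : 1 - t = mu := by ring
      rw [h1t, hmun]
      have hpa : p * (1 - lam) = a := by
        rw [hp, hlam]; field_simp; ring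
      have hqb : q * (1 - lam) = b := by
        rw [hq, hlam]; field_simp; ring
      rw [hpa, hqb]

/-- a `2×2` Markov matrix is infinitely divisible iff it is
monotone (iff its trace is `≥ 1`); moreover, every monotone `2×2` Markov
matrix has a monotone Markov `n`-th root for every `n ≥ 1`. -/
theorem stmt_11 (M : Matrix (Fin 2) (Fin 2) ℝ) (hM : IsMarkov M) :
    ((∀ n : ℕ, 1 ≤ n → ∃ R : Matrix (Fin 2) (Fin 2) ℝ, IsMarkov R ∧ R ^ n = M)
        ↔ IsMonotone M) ∧
    (IsMonotone M ↔ 1 ≤ Matrix.trace M) ∧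
    (IsMonotone M →
      ∀ n : ℕ, 1 ≤ n →
        ∃ R : Matrix (Fin 2) (Fin 2) ℝ, IsMarkov R ∧ IsMonotone R ∧ R ^ n = M) := by
  obtain ⟨hnn, hrow⟩ := hM
  have h0 : M 0 0 + M 0 1 = 1 := by simpa [Fin.sum_univ_two] using hrow 0
  have h1 : M 1 0 + M 1 1 = 1 := by simpa [Fin.sum_univ_two] using hrow 1
  have hMeq : M = f2 (M 0 1) (M 1 0) := by
    ext i j; fin_cases i <;> fin_cases j <;> simp [f2] <;> linarith
  have traceM : Matrix.trace M = M 0 0 + M 1 1 := by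
    simp [Matrix.trace, Matrix.diag, Fin.sum_univ_two]
  have mono_iff : IsMonotone M ↔ M 0 1 + M 1 0 ≤ 1 := by
    constructor
    · intro h; have := mono_01 h; linarith
    · intro h; rw [hMeq]; exact f2_mono h
  have part3 : IsMonotone M → ∀ n : ℕ, 1 ≤ n →
      ∃ R : Matrix (Fin 2) (Fin 2) ℝ, IsMarkov R ∧ IsMonotone R ∧ R ^ n = M := by
    intro hmono n hn
    have hab : M 0 1 + M 1 0 ≤ 1 := mono_iff.mp hmono
    obtain ⟨α, β, hα0, hα1, hβ0, hβ1, hαβ, hpow⟩ :=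
      root_exists (M 0 1) (M 1 0) (hnn 0 1) (hnn 1 0) hab n hn
    exact ⟨f2 α β, f2_markov hα0 hα1 hβ0 hβ1, f2_mono hαβ, by rw [hpow, ← hMeq]⟩
  have part_fwd : (∀ n : ℕ, 1 ≤ n →
      ∃ R : Matrix (Fin 2) (Fin 2) ℝ, IsMarkov R ∧ R ^ n = M) → IsMonotone M := by
    intro hdiv
    obtain ⟨R, ⟨hRnn, hRrow⟩, hR2⟩ := hdiv 2 (by norm_num)
    have hR0 : R 0 0 + R 0 1 = 1 := by simpa [Fin.sum_univ_two] using hRrow 0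
    have hR1 : R 1 0 + R 1 1 = 1 := by simpa [Fin.sum_univ_two] using hRrow 1
    have e01 : M 0 1 = R 0 0 * R 0 1 + R 0 1 * R 1 1 := by
      rw [← hR2, pow_two]; simp [Matrix.mul_apply, Fin.sum_univ_two]
    have e10 : M 1 0 = R 1 0 * R 0 0 + R 1 1 * R 1 0 := by
      rw [← hR2, pow_two]; simp [Matrix.mul_apply, Fin.sum_univ_two]
    apply mono_iff.mpr
    nlinarith [sq_nonneg (1 - R 0 1 - R 1 0), hRnn 0 1, hRnn 1 0]
  refine ⟨⟨part_fwd, fun h n hn => ?_⟩, ?_, part3⟩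
  · obtain ⟨R, hR1, _, hR3⟩ := part3 h n hn
    exact ⟨R, hR1, hR3⟩
  · rw [mono_iff, traceM]; constructor <;> intro <;> linarith
end

section
/- Let d ≥ 2, let C be a nonnegative d×d matrix with equal rows and parameter sum c ∈ [0,1], and let M = (1-c)·I + C. Then M is a monotone Markov matrix, and: (1) M is an idempotent (M² = M) if and only if c ∈ {0,1}, with c = 0 meaning M = I; (2) M is embeddable if and only if c ∈ [0,1); (3) for every positive integer n, M has an n-th root Rⁿ = M where R is a Markov matrix that is simultaneously equal-input and monotone; explicitly, for c > 0 one may take R = (1-c)^{1/n}·I + (1-(1-c)^{1/n})·(1/c)·C. -/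
open Matrix

section helpers
variable {d : ℕ}

lemma real_exp_tsum_shift (x : ℝ) :
    Real.exp x = 1 + ∑' k : ℕ, x ^ (k+1) / (Nat.factorial (k+1)) := by
  have h := Real.summable_pow_div_factorial x
  have := Summable.tsum_eq_zero_add h
  rw [Real.exp_eq_exp_ℝ, NormedSpace.exp_eq_tsum_div]
  simpa using this

lemma exp_idem (P : Matrix (Fin d) (Fin d) ℝ) (hP : P * P = P) (s : ℝ) :
    NormedSpace.exp (s • (P - 1)) = 1 + (1 - Real.exp (-s)) • (P - 1) := by
  letI : SeminormedRing (Matrix (Fin d) (Fin d) ℝ) := Matrix.linftyOpSemiNormedRing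
  letI : NormedRing (Matrix (Fin d) (Fin d) ℝ) := Matrix.linftyOpNormedRing
  letI : NormedAlgebra ℝ (Matrix (Fin d) (Fin d) ℝ) := Matrix.linftyOpNormedAlgebra
  set N := P - 1 with hNdef
  have hN : N * N = -N := by
    simp only [hNdef, sub_mul, mul_sub, hP, mul_one, one_mul]
    abel
  have hNk : ∀ k : ℕ, N ^ (k+1) = ((-1:ℝ)^k) • N := by
    intro k; induction k with
    | zero => simp
    | succ k ih =>
      rw [pow_succ, ih, smul_mul_assoc, hN, pow_succ]
      rw [smul_neg]
      rw [mul_neg_one, neg_smul]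
  have hsum : Summable (fun k : ℕ => ((Nat.factorial (k+1))⁻¹ : ℝ) • (s • N) ^ (k+1)) :=
    (NormedSpace.expSeries_summable' (𝕂 := ℝ) (s • N)).comp_injective (add_left_injective 1)
  rw [NormedSpace.exp_eq_tsum ℝ]
  simp only []
  erw [Summable.tsum_eq_zero_add (NormedSpace.expSeries_summable' (𝕂 := ℝ) (s • N))]
  have hterm : ∀ k : ℕ, (((Nat.factorial (k+1))⁻¹ : ℝ)) • (s • N) ^ (k+1)
      = (-((-s)^(k+1) / (Nat.factorial (k+1)))) • N := by
    intro k
    rw [smul_pow, hNk k, smul_smul, smul_smul]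
    have h3 : (-s)^(k+1) = -((-1)^k * s^(k+1)) := by
      rw [neg_pow]; ring
    rw [h3]
    field_simp
  simp only [hterm]
  rw [Summable.tsum_smul_const]
  · congr 1
    · simp
    · congr 1
      rw [tsum_neg]
      have := real_exp_tsum_shift (-s)
      have h2 : ∑' k : ℕ, (-s) ^ (k+1) / (Nat.factorial (k+1)) = Real.exp (-s) - 1 := by
        linarith
      rw [h2]; ring
  · have : Summable (fun k : ℕ => (-s) ^ (k+1) / (Nat.factorial (k+1))) := by
      have := (Real.summable_pow_div_factorial (-s)).comp_injective (add_left_injective 1)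
      exact this
    exact this.neg

lemma aff_mul (P : Matrix (Fin d) (Fin d) ℝ) (hP : P * P = P) (a b a' b' : ℝ) :
    (a • (1 : Matrix (Fin d) (Fin d) ℝ) + b • P) * (a' • 1 + b' • P)
      = (a * a') • 1 + (a * b' + b * a' + b * b') • P := by
  simp only [add_mul, mul_add, smul_mul_assoc, mul_smul_comm, one_mul, mul_one, hP, smul_smul]
  module

lemma aff_pow (P : Matrix (Fin d) (Fin d) ℝ) (hP : P * P = P) (a : ℝ) (n : ℕ) :
    (a • (1 : Matrix (Fin d) (Fin d) ℝ) + (1 - a) • P) ^ n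
      = (a ^ n) • 1 + (1 - a ^ n) • P := by
  induction n with
  | zero => simp
  | succ n ih =>
    rw [pow_succ, ih, aff_mul P hP]
    have h1 : a ^ n * a = a ^ (n+1) := (pow_succ a n).symm
    have h2 : a ^ n * (1-a) + (1-a^n)*a + (1-a^n)*(1-a) = 1 - a^(n+1) := by
      rw [pow_succ]; ring
    rw [h1, h2]

lemma helper_mm (c' : ℝ) (h0 : 0 ≤ c') (h1 : c' ≤ 1)
    (C' : Matrix (Fin d) (Fin d) ℝ) (hn : ∀ i j, 0 ≤ C' i j)
    (hr : ∀ i i', C' i = C' i') (hs : ∀ i, ∑ j, C' i j = c') :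
    IsMarkov ((1 - c') • (1 : Matrix (Fin d) (Fin d) ℝ) + C')
      ∧ IsMonotone ((1 - c') • (1 : Matrix (Fin d) (Fin d) ℝ) + C') := by
  refine ⟨⟨?_, ?_⟩, ?_⟩
  · intro i j
    simp only [Matrix.add_apply, Matrix.smul_apply, Matrix.one_apply, smul_eq_mul]
    have := hn i j
    split <;> nlinarith
  · intro i
    simp only [Matrix.add_apply, Matrix.smul_apply, Matrix.one_apply, smul_eq_mul]
    rw [Finset.sum_add_distrib, hs i, ← Finset.mul_sum, Finset.sum_ite_eq]
    simp
  · intro i j hij m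
    simp only [Matrix.add_apply, Matrix.smul_apply, Matrix.one_apply, smul_eq_mul]
    rw [Finset.sum_add_distrib, Finset.sum_add_distrib]
    have hC : ∑ k ∈ Finset.Ici m, C' i k = ∑ k ∈ Finset.Ici m, C' j k :=
      Finset.sum_congr rfl fun k _ => by rw [hr i j]
    rw [hC]
    apply add_le_add_left
    rw [← Finset.mul_sum, ← Finset.mul_sum, Finset.sum_ite_eq, Finset.sum_ite_eq]
    by_cases him : m ≤ i
    · have hjm : m ≤ j := le_trans him hij
      simp [Finset.mem_Ici, him, hjm]
    · simp only [Finset.mem_Ici, him, if_false, mul_zero]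
      split <;> nlinarith
end helpers

/-- an equal-input matrix `M = (1-c)·I + C` with `c ∈ [0,1]` is
a monotone Markov matrix; it is idempotent iff `c ∈ {0,1}` (with `c = 0` iff
`M = I`), embeddable iff `c < 1`, and for every `n ≥ 1` it has a Markov
`n`-th root that is simultaneously equal-input and monotone, explicitly given
for `c > 0` by `R = (1-c)^{1/n}·I + (1-(1-c)^{1/n})·(1/c)·C`. -/
theorem stmt_12 {d : ℕ} (hd : 2 ≤ d)
    (C : Matrix (Fin d) (Fin d) ℝ)
    (hCnonneg : ∀ i j, 0 ≤ C i j)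
    (hCrows : ∀ i i', C i = C i')
    (c : ℝ) (hc : ∀ i, ∑ j, C i j = c)
    (hc0 : 0 ≤ c) (hc1 : c ≤ 1)
    (M : Matrix (Fin d) (Fin d) ℝ)
    (hM : M = (1 - c) • (1 : Matrix (Fin d) (Fin d) ℝ) + C) :
    (IsMarkov M ∧ IsMonotone M) ∧
    (M * M = M ↔ c = 0 ∨ c = 1) ∧
    (c = 0 ↔ M = 1) ∧
    (IsEmbeddable M ↔ c < 1) ∧
    (∀ n : ℕ, 1 ≤ n →
      ∃ R : Matrix (Fin d) (Fin d) ℝ,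
        IsMarkov R ∧ IsMonotone R ∧ IsEqualInput R ∧ R ^ n = M) ∧
    (0 < c → ∀ n : ℕ, 1 ≤ n →
      (((1 - c) ^ ((n : ℝ)⁻¹)) • (1 : Matrix (Fin d) (Fin d) ℝ)
          + (1 - (1 - c) ^ ((n : ℝ)⁻¹)) • (c⁻¹ • C)) ^ n = M) := by
  have hd0 : (0:ℕ) < d := by omega
  have hd1 : (1:ℕ) < d := by omega
  set i0 : Fin d := ⟨0, hd0⟩ with hi0
  set i1 : Fin d := ⟨1, hd1⟩ with hi1
  have hne : i1 ≠ i0 := by simp [hi0, hi1, Fin.ext_iff]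
  -- C * C = c • C
  have hCC : C * C = c • C := by
    ext i j
    simp only [Matrix.mul_apply, Matrix.smul_apply, smul_eq_mul]
    have h1 : ∀ k, C k j = C i j := fun k => by rw [hCrows k i]
    calc ∑ k, C i k * C k j = ∑ k, C i k * C i j :=
          Finset.sum_congr rfl fun k _ => by rw [h1 k]
      _ = (∑ k, C i k) * C i j := by rw [← Finset.sum_mul]
      _ = c * C i j := by rw [hc i]
  have hCzero : c = 0 → C = 0 := by
    intro h0
    ext i j
    have hsum := hc i
    rw [h0] at hsum
    have := (Finset.sum_eq_zero_iff_of_nonneg (fun k _ => hCnonneg i k)).mp hsum j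
      (Finset.mem_univ j)
    simpa using this
  -- facts about P = c⁻¹ • C when c ≠ 0
  have hPfacts : c ≠ 0 →
      ((c⁻¹ • C) * (c⁻¹ • C) = c⁻¹ • C) ∧ (∀ i, ∑ j, (c⁻¹ • C) i j = 1)
        ∧ (c • (c⁻¹ • C) = C) := by
    intro hcne
    refine ⟨?_, ?_, ?_⟩
    · rw [Matrix.smul_mul, Matrix.mul_smul, hCC, smul_smul, smul_smul]
      congr 1
      field_simp
    · intro i
      simp only [Matrix.smul_apply, smul_eq_mul]
      rw [← Finset.mul_sum, hc i, inv_mul_cancel₀ hcne]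
    · rw [smul_smul, mul_inv_cancel₀ hcne, one_smul]
  -- Part 1
  have part1 : IsMarkov M ∧ IsMonotone M := by
    rw [hM]; exact helper_mm c hc0 hc1 C hCnonneg hCrows hc
  -- Part 3
  have part3 : c = 0 ↔ M = 1 := by
    constructor
    · intro h0
      rw [hM, hCzero h0, h0]
      simp
    · intro h1
      have e1 : C i1 i0 = C i0 i0 := congrFun (hCrows i1 i0) i0
      have e2 : M i1 i0 = 0 := by rw [h1, Matrix.one_apply_ne hne]
      have e3 : M i0 i0 = 1 := by rw [h1, Matrix.one_apply_eq]
      rw [hM] at e2 e3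
      simp only [Matrix.add_apply, Matrix.smul_apply, Matrix.one_apply, smul_eq_mul] at e2 e3
      norm_num at e2 e3
      rw [if_neg hne, e1] at e2
      linarith
  -- Part 2
  have part2 : M * M = M ↔ c = 0 ∨ c = 1 := by
    constructor
    · intro h
      by_contra hcon
      push_neg at hcon
      obtain ⟨h0, h1⟩ := hcon
      have h1c : (1:ℝ) - c ≠ 0 := sub_ne_zero.mpr (Ne.symm h1)
      have hMsq : M * M = ((1-c)*(1-c)) • (1 : Matrix (Fin d) (Fin d) ℝ)
          + ((1-c) • C + ((1-c) • C + c • C)) := by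
        rw [hM]
        simp only [add_mul, mul_add, smul_mul_assoc, mul_smul_comm, one_mul, mul_one, hCC,
          smul_smul]
        module
      rw [hMsq, hM] at h
      have eOff := congrFun (congrFun h i1) i0
      have eDiag := congrFun (congrFun h i0) i0
      simp only [Matrix.add_apply, Matrix.smul_apply, Matrix.one_apply, smul_eq_mul] at eOff eDiag
      norm_num at eOff eDiag
      rw [if_neg hne, if_neg hne] at eOff
      have e1 : C i1 i0 = C i0 i0 := congrFun (hCrows i1 i0) i0
      rw [e1] at eOff
      set q := C i0 i0 with hq
      have hq0 : (1 - c) * q = 0 := by linear_combination eOff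
      have hqz : q = 0 := (mul_eq_zero.mp hq0).resolve_left h1c
      rw [hqz] at eDiag
      have : c * (1 - c) = 0 := by linear_combination -eDiag
      rcases mul_eq_zero.mp this with h | h
      · exact h0 h
      · exact h1c h
    · rintro (h | h)
      · have := (part3.mp h)
        rw [this, mul_one]
      · rw [hM, h]
        simp only [sub_self, zero_smul, zero_add]
        rw [hCC, h, one_smul]
  -- Part 4
  have part4 : IsEmbeddable M ↔ c < 1 := by
    constructor
    · rintro ⟨Q, hQ, hQM⟩
      by_contra hcon
      have hc1' : c = 1 := le_antisymm hc1 (not_lt.mp hcon)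
      have hMC : M = C := by rw [hM, hc1']; simp
      have hrow : M i1 = M i0 := by rw [hMC]; exact hCrows i1 i0
      have hdet : M.det = 0 := Matrix.det_zero_of_row_eq hne hrow
      have hunit : IsUnit M := by rw [← hQM]; exact Matrix.isUnit_exp Q
      have := (Matrix.isUnit_iff_isUnit_det M).mp hunit
      rw [hdet] at this
      exact one_ne_zero ((isUnit_zero_iff.mp this).symm)
    · intro hlt
      by_cases hcz : c = 0
      · refine ⟨0, ⟨fun i j _ => le_rfl, fun i => by simp⟩, ?_⟩
        rw [NormedSpace.exp_zero]
        exact (part3.mp hcz).symm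
      · obtain ⟨hPP, hProw, hcP⟩ := hPfacts hcz
        set P := c⁻¹ • C with hPdef
        have hPnn : ∀ i j, 0 ≤ P i j := by
          intro i j
          simp only [hPdef, Matrix.smul_apply, smul_eq_mul]
          exact mul_nonneg (inv_nonneg.mpr hc0) (hCnonneg i j)
        set s : ℝ := -Real.log (1 - c) with hs
        have h1cpos : (0:ℝ) < 1 - c := by linarith
        have hs0 : 0 ≤ s := by
          rw [hs]
          have : Real.log (1 - c) ≤ 0 := Real.log_nonpos (by linarith) (by linarith)
          linarith
        have hexps : Real.exp (-s) = 1 - c := by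
          rw [hs, neg_neg, Real.exp_log h1cpos]
        refine ⟨s • (P - 1), ⟨?_, ?_⟩, ?_⟩
        · intro i j hij
          simp only [Matrix.smul_apply, Matrix.sub_apply, Matrix.one_apply, smul_eq_mul]
          rw [if_neg hij]
          have := hPnn i j
          nlinarith
        · intro i
          simp only [Matrix.smul_apply, Matrix.sub_apply, Matrix.one_apply, smul_eq_mul]
          rw [← Finset.mul_sum, Finset.sum_sub_distrib, hProw i, Finset.sum_ite_eq]
          simp
        · rw [exp_idem P hPP s, hexps, hM]
          have : (1 - (1 - c)) = c := by ring
          rw [this, smul_sub, hcP]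
          module
  -- key power computation
  have key : 0 < c → ∀ n : ℕ, 1 ≤ n →
      (((1 - c) ^ ((n : ℝ)⁻¹)) • (1 : Matrix (Fin d) (Fin d) ℝ)
          + (1 - (1 - c) ^ ((n : ℝ)⁻¹)) • (c⁻¹ • C)) ^ n = M := by
    intro hcpos n hn
    obtain ⟨hPP, hProw, hcP⟩ := hPfacts (ne_of_gt hcpos)
    set r : ℝ := (1 - c) ^ ((n : ℝ)⁻¹) with hr
    have hrn : r ^ n = 1 - c := by
      rw [hr]
      exact Real.rpow_inv_natCast_pow (by linarith) (by omega)
    rw [aff_pow _ hPP r n, hrn]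
    have : (1 - (1 - c)) = c := by ring
    rw [this, hcP, hM]
  -- Part 5
  have part5 : ∀ n : ℕ, 1 ≤ n →
      ∃ R : Matrix (Fin d) (Fin d) ℝ,
        IsMarkov R ∧ IsMonotone R ∧ IsEqualInput R ∧ R ^ n = M := by
    intro n hn
    by_cases hcz : c = 0
    · refine ⟨1, ?_, ?_, ?_, ?_⟩
      · constructor
        · intro i j
          rw [Matrix.one_apply]
          split <;> norm_num
        · intro i
          simp [Matrix.one_apply, Finset.sum_ite_eq]
      · have h := (helper_mm (d := d) 0 le_rfl zero_le_one 0
          (fun i j => le_rfl) (fun i i' => rfl) (fun i => by simp)).2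
        simpa using h
      · exact ⟨0, 0, fun i j => le_rfl, fun i i' => rfl, fun i => by simp, by simp⟩
      · rw [one_pow, (part3.mp hcz)]
    · have hcpos : 0 < c := lt_of_le_of_ne hc0 (Ne.symm hcz)
      obtain ⟨hPP, hProw, hcP⟩ := hPfacts hcz
      set P := c⁻¹ • C with hPdef
      have hPnn : ∀ i j, 0 ≤ P i j := by
        intro i j
        simp only [hPdef, Matrix.smul_apply, smul_eq_mul]
        exact mul_nonneg (inv_nonneg.mpr hc0) (hCnonneg i j)
      set r : ℝ := (1 - c) ^ ((n : ℝ)⁻¹) with hr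
      have hr0 : 0 ≤ r := Real.rpow_nonneg (by linarith) _
      have hr1 : r ≤ 1 := Real.rpow_le_one (by linarith) (by linarith)
        (inv_nonneg.mpr (Nat.cast_nonneg n))
      set C' : Matrix (Fin d) (Fin d) ℝ := (1 - r) • P with hC'
      have hC'nn : ∀ i j, 0 ≤ C' i j := by
        intro i j
        simp only [hC', Matrix.smul_apply, smul_eq_mul]
        exact mul_nonneg (by linarith) (hPnn i j)
      have hC'rows : ∀ i i', C' i = C' i' := by
        intro i i'
        funext j
        simp only [hC', Matrix.smul_apply, smul_eq_mul, hPdef]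
        rw [congrFun (hCrows i i') j]
      have hC'sum : ∀ i, ∑ j, C' i j = 1 - r := by
        intro i
        simp only [hC', Matrix.smul_apply, smul_eq_mul]
        rw [← Finset.mul_sum, hProw i, mul_one]
      have hRform : r • (1 : Matrix (Fin d) (Fin d) ℝ) + C'
          = (1 - (1 - r)) • (1 : Matrix (Fin d) (Fin d) ℝ) + C' := by
        congr 1
        rw [sub_sub_cancel]
      refine ⟨r • 1 + C', ?_, ?_, ?_, ?_⟩
      · rw [hRform]
        exact (helper_mm (1 - r) (by linarith) (by linarith) C' hC'nn hC'rows hC'sum).1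
      · rw [hRform]
        exact (helper_mm (1 - r) (by linarith) (by linarith) C' hC'nn hC'rows hC'sum).2
      · exact ⟨1 - r, C', hC'nn, hC'rows, hC'sum, by rw [hRform]⟩
      · have := key hcpos n hn
        exact this
  exact ⟨part1, part2, part3, part4, part5, key⟩
end

section
/- Let d ≥ 2 and let M = (1-c)·I + C be a d×d equal-input Markov matrix with summatory parameter c. Then M is monotone if and only if c ∈ [0,1]. Moreover, the set of monotone equal-input Markov matrices is convex, with exactly the d+1 extreme points E₁, …, E_d and I, where E_i is the Markov matrix all of whose rows equal the standard basis vector e_i. -/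
open Matrix

section Aux

variable {d : ℕ}

lemma markov_row_one {x : Matrix (Fin d) (Fin d) ℝ} (hx : IsMarkov x)
    {i j₀ : Fin d} (h0 : ∀ j, j ≠ j₀ → x i j = 0) : x i j₀ = 1 := by
  have h := hx.2 i
  rwa [Finset.sum_eq_single j₀ (fun j _ hj => h0 j hj) (by simp)] at h

lemma mono_of_c {c : ℝ} {v : Fin d → ℝ} (hc1 : c ≤ 1) (hsum : ∑ j, v j = c)
    {M : Matrix (Fin d) (Fin d) ℝ}
    (hM : ∀ i j, M i j = (if i = j then (1 - c) else 0) + v j) :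
    IsMonotone M := by
  intro i j hij m
  simp only [hM]
  rw [Finset.sum_add_distrib, Finset.sum_add_distrib]
  have key : ∀ i : Fin d,
      ∑ k ∈ Finset.Ici m, (if i = k then (1 - c) else 0)
        = if m ≤ i then 1 - c else 0 := by
    intro i
    rw [Finset.sum_ite_eq]
    simp [Finset.mem_Ici]
  rw [key i, key j]
  have : (if m ≤ i then (1:ℝ) - c else 0) ≤ (if m ≤ j then 1 - c else 0) := by
    split_ifs with h1 h2 h2
    · exact le_refl _
    · exact absurd (le_trans h1 hij) h2
    · linarith
    · exact le_refl _
  linarith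

/-- Membership in the set from the simplex data. -/
lemma mem_S {v : Fin d → ℝ} (hv : ∀ j, 0 ≤ v j) (hsum : ∑ j, v j ≤ 1)
    {M : Matrix (Fin d) (Fin d) ℝ}
    (hM : ∀ i j, M i j = (if i = j then (1 - ∑ j, v j) else 0) + v j) :
    IsMarkov M ∧ IsEqualInput M ∧ IsMonotone M := by
  have hrow : ∀ i, ∑ j, M i j = 1 := by
    intro i
    simp only [hM]
    rw [Finset.sum_add_distrib, Finset.sum_ite_eq]
    simp
  refine ⟨⟨fun i j => ?_, hrow⟩, ?_, mono_of_c hsum rfl hM⟩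
  · rw [hM]
    split_ifs with h
    · have := hv j; linarith
    · simpa using hv j
  · refine ⟨∑ j, v j, Matrix.of (fun _ j => v j), fun i j => hv j,
      fun i i' => rfl, fun i => rfl, ?_⟩
    ext i j
    simp only [hM, Matrix.add_apply, Matrix.smul_apply, Matrix.one_apply, Matrix.of_apply,
      smul_eq_mul]
    split_ifs <;> ring

lemma c_le_one (hd : 2 ≤ d) {c : ℝ} {v : Fin d → ℝ}
    {M : Matrix (Fin d) (Fin d) ℝ}
    (hM : ∀ i j, M i j = (if i = j then (1 - c) else 0) + v j)
    (hmono : IsMonotone M) : c ≤ 1 := by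
  have h0 : 0 < d := by omega
  set i0 : Fin d := ⟨0, h0⟩
  set i1 : Fin d := ⟨d - 1, by omega⟩
  have hle : i0 ≤ i1 := by simp [i0, i1, Fin.le_def]
  have hIci : Finset.Ici i1 = {i1} := by
    ext k
    simp only [Finset.mem_Ici, Finset.mem_singleton, Fin.le_def, Fin.ext_iff, i1]
    have := k.isLt
    omega
  have h := hmono i0 i1 hle i1
  rw [hIci, Finset.sum_singleton, Finset.sum_singleton, hM, hM] at h
  have hne : ¬ (i0 = i1) := by
    simp only [Fin.ext_iff, i0, i1]
    omega
  rw [if_neg hne, if_pos rfl] at h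
  linarith

/-- Extract simplex data from membership. -/
lemma mem_S_elim (hd : 2 ≤ d) {M : Matrix (Fin d) (Fin d) ℝ}
    (h : IsMarkov M ∧ IsEqualInput M ∧ IsMonotone M) :
    ∃ v : Fin d → ℝ, (∀ j, 0 ≤ v j) ∧ (∑ j, v j ≤ 1) ∧
      ∀ i j, M i j = (if i = j then (1 - ∑ j, v j) else 0) + v j := by
  obtain ⟨c, C, hC, hrows, hsum, hMeq⟩ := h.2.1
  set i0 : Fin d := ⟨0, by omega⟩ with hi0
  have hpt : ∀ i j, M i j = (if i = j then (1 - c) else 0) + C i0 j := by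
    intro i j
    have hrow : C i j = C i0 j := by rw [hrows i i0]
    rw [hMeq]
    simp only [Matrix.add_apply, Matrix.smul_apply, Matrix.one_apply, smul_eq_mul, hrow]
    split_ifs <;> ring
  have hc : ∑ j, C i0 j = c := hsum i0
  refine ⟨C i0, fun j => hC i0 j, ?_, ?_⟩
  · rw [hc]; exact c_le_one hd hpt h.2.2
  · rw [hc]; exact hpt

lemma vertex_extreme {S : Set (Matrix (Fin d) (Fin d) ℝ)}
    (hS : ∀ M ∈ S, IsMarkov M) {x : Matrix (Fin d) (Fin d) ℝ} (hxS : x ∈ S)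
    (p : Fin d → Fin d) (hx : ∀ i j, x i j = if j = p i then 1 else 0) :
    x ∈ S.extremePoints ℝ := by
  have key : ∀ y : Matrix (Fin d) (Fin d) ℝ, IsMarkov y →
      (∀ i j, j ≠ p i → y i j = 0) → y = x := by
    intro y hy h0
    ext i j
    rcases eq_or_ne j (p i) with h | h
    · subst h
      rw [markov_row_one hy (h0 i), hx]
      simp
    · rw [h0 i j h, hx, if_neg h]
  refine ⟨hxS, fun x₁ hx₁ x₂ hx₂ hseg => ?_⟩
  obtain ⟨a, b, ha, hb, hab, heq⟩ := hseg
  have hz : ∀ i j, j ≠ p i → x₁ i j = 0 ∧ x₂ i j = 0 := by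
    intro i j hj
    have h1 := (hS x₁ hx₁).1 i j
    have h2 := (hS x₂ hx₂).1 i j
    have h0 : a * x₁ i j + b * x₂ i j = 0 := by
      have := congrFun (congrFun heq i) j
      simp only [Matrix.add_apply, Matrix.smul_apply, smul_eq_mul] at this
      rw [this, hx, if_neg hj]
    constructor <;> nlinarith
  exact key x₁ (hS x₁ hx₁) (fun i j hj => (hz i j hj).1)

end Aux


/-- an equal-input Markov matrix is monotone iff its summatory
parameter lies in `[0,1]`; the set of monotone equal-input Markov matrices is
convex with precisely the `d+1` extreme points `E₁, …, E_d, I`. -/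
theorem stmt_13 {d : ℕ} (hd : 2 ≤ d) :
    (∀ (C : Matrix (Fin d) (Fin d) ℝ) (c : ℝ) (M : Matrix (Fin d) (Fin d) ℝ),
      (∀ i j, 0 ≤ C i j) → (∀ i i', C i = C i') → (∀ i, ∑ j, C i j = c) →
      M = (1 - c) • (1 : Matrix (Fin d) (Fin d) ℝ) + C → IsMarkov M →
      (IsMonotone M ↔ (0 ≤ c ∧ c ≤ 1))) ∧
    Convex ℝ {M : Matrix (Fin d) (Fin d) ℝ | IsMarkov M ∧ IsEqualInput M ∧ IsMonotone M} ∧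
    Set.extremePoints ℝ
        {M : Matrix (Fin d) (Fin d) ℝ | IsMarkov M ∧ IsEqualInput M ∧ IsMonotone M}
      = insert (1 : Matrix (Fin d) (Fin d) ℝ) (Set.range (Ecol (d := d))) ∧
    (insert (1 : Matrix (Fin d) (Fin d) ℝ) (Set.range (Ecol (d := d)))).ncard = d + 1 := by
  set S := {M : Matrix (Fin d) (Fin d) ℝ | IsMarkov M ∧ IsEqualInput M ∧ IsMonotone M} with hSdef
  have hmem : ∀ M ∈ S, IsMarkov M := fun M h => h.1
  -- membership of the vertices
  have hone : (1 : Matrix (Fin d) (Fin d) ℝ) ∈ S := by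
    refine mem_S (v := fun _ => (0:ℝ)) (fun j => le_refl 0) (by simp) ?_
    intro i j
    simp [Matrix.one_apply]
  have hEcolS : ∀ k : Fin d, Ecol k ∈ S := by
    intro k
    have hsum1 : ∑ j : Fin d, (if j = k then (1:ℝ) else 0) = 1 := by simp
    refine mem_S (v := fun j => if j = k then (1:ℝ) else 0)
      (fun j => by split_ifs <;> norm_num) (by rw [hsum1]) ?_
    intro i j
    rw [hsum1]
    simp [Ecol]
  -- Part 1
  have part1 : ∀ (C : Matrix (Fin d) (Fin d) ℝ) (c : ℝ) (M : Matrix (Fin d) (Fin d) ℝ),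
      (∀ i j, 0 ≤ C i j) → (∀ i i', C i = C i') → (∀ i, ∑ j, C i j = c) →
      M = (1 - c) • (1 : Matrix (Fin d) (Fin d) ℝ) + C → IsMarkov M →
      (IsMonotone M ↔ (0 ≤ c ∧ c ≤ 1)) := by
    intro C c M hC hrows hsum hMeq hMk
    set i0 : Fin d := ⟨0, by omega⟩ with hi0
    have hpt : ∀ i j, M i j = (if i = j then (1 - c) else 0) + C i0 j := by
      intro i j
      have hrow : C i j = C i0 j := by rw [hrows i i0]
      rw [hMeq]
      simp only [Matrix.add_apply, Matrix.smul_apply, Matrix.one_apply, smul_eq_mul, hrow]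
      split_ifs <;> ring
    constructor
    · intro hmono
      refine ⟨?_, c_le_one hd hpt hmono⟩
      rw [← hsum i0]
      exact Finset.sum_nonneg fun j _ => hC i0 j
    · rintro ⟨h0, h1⟩
      exact mono_of_c h1 (hsum i0) hpt
  -- convexity
  have conv : Convex ℝ S := by
    intro M₁ hM₁ M₂ hM₂ a b ha hb hab
    obtain ⟨v₁, hv₁, hs₁, hp₁⟩ := mem_S_elim hd hM₁
    obtain ⟨v₂, hv₂, hs₂, hp₂⟩ := mem_S_elim hd hM₂
    have hsv : ∑ j, (a * v₁ j + b * v₂ j) = a * (∑ j, v₁ j) + b * (∑ j, v₂ j) := by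
      rw [Finset.sum_add_distrib, Finset.mul_sum, Finset.mul_sum]
    refine mem_S (v := fun j => a * v₁ j + b * v₂ j)
      (fun j => add_nonneg (mul_nonneg ha (hv₁ j)) (mul_nonneg hb (hv₂ j)))
      (by rw [hsv]; nlinarith) ?_
    intro i j
    simp only [Matrix.add_apply, Matrix.smul_apply, smul_eq_mul, hsv]
    rw [hp₁, hp₂]
    split_ifs
    · linear_combination hab
    · ring
  refine ⟨part1, conv, ?_, ?_⟩
  · -- extreme points
    ext x
    constructor
    · intro hx
      obtain ⟨v, hv, hvs, hp⟩ := mem_S_elim hd hx.1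
      have hc0 : 0 ≤ ∑ j, v j := Finset.sum_nonneg fun j _ => hv j
      rcases hvs.lt_or_eq with hclt | hc1
      · rcases hc0.lt_or_eq with hcpos | hczero
        · -- 0 < c < 1 : open segment between 1 and q
          left
          have hcne : (∑ k, v k) ≠ 0 := ne_of_gt hcpos
          have hsw : ∑ j, v j / (∑ k, v k) = 1 := by
            rw [← Finset.sum_div, div_self hcne]
          have hq : (Matrix.of fun _ j => v j / (∑ k, v k) :
              Matrix (Fin d) (Fin d) ℝ) ∈ S := by
            refine mem_S (v := fun j => v j / (∑ k, v k))
              (fun j => div_nonneg (hv j) hc0) (by rw [hsw]) ?_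
            intro i j
            rw [hsw]
            simp
          have hseg : x ∈ openSegment ℝ (1 : Matrix (Fin d) (Fin d) ℝ)
              (Matrix.of fun _ j => v j / (∑ k, v k)) := by
            refine ⟨1 - ∑ k, v k, ∑ k, v k, by linarith, hcpos, by ring, ?_⟩
            ext i j
            simp only [Matrix.add_apply, Matrix.smul_apply, Matrix.one_apply, smul_eq_mul,
              Matrix.of_apply]
            rw [hp, mul_comm (∑ k, v k) _, div_mul_cancel₀ _ hcne]
            split_ifs <;> ring
          exact (hx.2 hone hq hseg).symm
        · -- c = 0 : x = 1
          left
          have hz : ∀ j, v j = 0 := by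
            intro j
            exact (Finset.sum_eq_zero_iff_of_nonneg (fun j _ => hv j)).1 hczero.symm j
              (Finset.mem_univ j)
          ext i j
          rw [hp, Matrix.one_apply]
          simp [hz, ← hczero]
      · -- c = 1
        have hp1 : ∀ i j, x i j = v j := by
          intro i j
          rw [hp, hc1]
          simp
        by_cases hex : ∃ k, v k = 1
        · obtain ⟨k, hk⟩ := hex
          right
          refine ⟨k, ?_⟩
          have hrest : ∀ j, j ≠ k → v j = 0 := by
            intro j hj
            have hsplit : v k + ∑ j ∈ Finset.univ.erase k, v j = ∑ j, v j :=
              Finset.add_sum_erase _ _ (Finset.mem_univ k)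
            have h0 : ∑ j ∈ Finset.univ.erase k, v j = 0 := by
              rw [hc1] at hsplit; linarith [hk]
            exact (Finset.sum_eq_zero_iff_of_nonneg (fun j _ => hv j)).1 h0 j
              (Finset.mem_erase.2 ⟨hj, Finset.mem_univ j⟩)
          ext i j
          rw [hp1]
          rcases eq_or_ne j k with rfl | hjk
          · simp [Ecol, hk]
          · simp [Ecol, hjk, hrest j hjk]
        · push_neg at hex
          obtain ⟨k, hkpos⟩ : ∃ k, 0 < v k := by
            by_contra h
            push_neg at h
            have : ∑ j, v j ≤ 0 := Finset.sum_nonpos fun j _ => h j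
            rw [hc1] at this; linarith
          have hklt : v k < 1 :=
            lt_of_le_of_ne (hc1 ▸ Finset.single_le_sum (fun j _ => hv j) (Finset.mem_univ k))
              (hex k)
          have hkne : (1 : ℝ) - v k ≠ 0 := by linarith
          set w : Fin d → ℝ := fun j => (if j = k then 0 else v j) / (1 - v k) with hw
          have hwnn : ∀ j, 0 ≤ w j := by
            intro j
            apply div_nonneg _ (by linarith)
            split_ifs
            · exact le_refl 0
            · exact hv j
          have hsplit : ∑ j, (if j = k then (0:ℝ) else v j) = 1 - v k := by
            have h1 : ∑ j, (if j = k then (0:ℝ) else v j)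
                + ∑ j, (if j = k then v j else 0) = ∑ j, v j := by
              rw [← Finset.sum_add_distrib]
              apply Finset.sum_congr rfl
              intro j _
              split_ifs <;> ring
            rw [Finset.sum_ite_eq' Finset.univ k v, if_pos (Finset.mem_univ k), hc1] at h1
            linarith
          have hws : ∑ j, w j = 1 := by
            simp only [hw, ← Finset.sum_div, hsplit]
            rw [div_self hkne]
          have hq : (Matrix.of fun _ j => w j : Matrix (Fin d) (Fin d) ℝ) ∈ S := by
            refine mem_S hwnn (by rw [hws]) ?_
            intro i j
            rw [hws]
            simp
          have hseg : x ∈ openSegment ℝ (Ecol k)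
              (Matrix.of fun _ j => w j) := by
            refine ⟨v k, 1 - v k, hkpos, by linarith, by ring, ?_⟩
            ext i j
            simp only [Matrix.add_apply, Matrix.smul_apply, smul_eq_mul, Matrix.of_apply,
              Ecol, hw]
            rw [hp1]
            rcases eq_or_ne j k with rfl | hjk
            · simp
            · rw [if_neg hjk, if_neg hjk, mul_comm ((1:ℝ) - v k) _,
                div_mul_cancel₀ _ hkne]
              ring
          right
          exact ⟨k, hx.2 (hEcolS k) hq hseg⟩
    · intro hx
      rcases hx with rfl | ⟨k, rfl⟩
      · exact vertex_extreme hmem hone id (fun i j => by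
          rw [Matrix.one_apply]; exact if_congr ⟨Eq.symm, Eq.symm⟩ rfl rfl)
      · exact vertex_extreme hmem (hEcolS k) (fun _ => k) (fun i j => rfl)
  · -- cardinality
    have hnot : (1 : Matrix (Fin d) (Fin d) ℝ) ∉ Set.range (Ecol (d := d)) := by
      rintro ⟨k, hk⟩
      set j : Fin d := ⟨if (k : ℕ) = 0 then 1 else 0, by split_ifs <;> omega⟩ with hj
      have hjk : j ≠ k := by
        simp only [Ne, Fin.ext_iff]
        show ¬((if (k : ℕ) = 0 then 1 else 0) = (k : ℕ))
        split_ifs with h <;> omega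
      have := congrFun (congrFun hk j) k
      rw [Matrix.one_apply, if_neg hjk] at this
      simp [Ecol] at this
    have hEinj : Function.Injective (Ecol (d := d)) := by
      intro a b hab
      have h := congrFun (congrFun hab ⟨0, by omega⟩) a
      simp only [Ecol, Matrix.of_apply, if_pos rfl] at h
      by_contra hne
      rw [if_neg hne] at h
      norm_num at h
    rw [Set.ncard_insert_of_notMem hnot (Set.finite_range _), ← Set.image_univ,
      Set.ncard_image_of_injective _ hEinj, Set.ncard_univ, Nat.card_eq_fintype_card,
      Fintype.card_fin]
end

section
/- Let Q be a d×d Markov generator. Then the following are equivalent: (1) exp(t·Q) is a monotone Markov matrix for every t ≥ 0; (2) Q is a monotone generator, i.e. all off-diagonal entries of T⁻¹·Q·T are nonnegative, where T is the lower-triangular d×d matrix with T_{ij} = 1 for j ≤ i and T_{ij} = 0 otherwise. -/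
open Matrix

/-- The lower-triangular all-ones matrix `T`. -/
def Tmat (d : ℕ) : Matrix (Fin d) (Fin d) ℝ :=
  Matrix.of fun i j => if j ≤ i then 1 else 0

namespace Stmt14Aux

open NormedSpace

variable {d : ℕ}

/-- The explicit inverse of `Tmat d`. -/
def Smat (d : ℕ) : Matrix (Fin d) (Fin d) ℝ :=
  Matrix.of fun i j =>
    (if (i : ℕ) = (j : ℕ) then 1 else 0) - (if (j : ℕ) + 1 = (i : ℕ) then 1 else 0)

lemma val_eq_prop (i k : Fin d) : ((i : ℕ) = (k : ℕ)) = (i = k) := propext Fin.val_inj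

lemma Smat_mul_apply (N : Matrix (Fin d) (Fin d) ℝ) (i j : Fin d) :
    (Smat d * N) i j
      = N i j - ∑ k : Fin d, (if (k : ℕ) + 1 = (i : ℕ) then N k j else 0) := by
  simp only [Smat, Matrix.mul_apply, Matrix.of_apply, sub_mul, ite_mul, one_mul, zero_mul,
    Finset.sum_sub_distrib]
  congr 1
  calc ∑ k : Fin d, (if (i : ℕ) = (k : ℕ) then N k j else 0)
      = ∑ k : Fin d, (if i = k then N k j else 0) :=
        Finset.sum_congr rfl fun k _ => by simp only [val_eq_prop]
    _ = N i j := by rw [Finset.sum_ite_eq]; simp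

lemma sum_pred_zero (i : Fin d) (h : (i : ℕ) = 0) (f : Fin d → ℝ) :
    ∑ k : Fin d, (if (k : ℕ) + 1 = (i : ℕ) then f k else 0) = 0 :=
  Finset.sum_eq_zero fun k _ => by rw [if_neg (by omega)]

lemma sum_pred_succ (i p : Fin d) (h : (p : ℕ) + 1 = (i : ℕ)) (f : Fin d → ℝ) :
    ∑ k : Fin d, (if (k : ℕ) + 1 = (i : ℕ) then f k else 0) = f p := by
  calc ∑ k : Fin d, (if (k : ℕ) + 1 = (i : ℕ) then f k else 0)
      = ∑ k : Fin d, (if k = p then f k else 0) := by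
        refine Finset.sum_congr rfl fun k _ => ?_
        have hk : ((k : ℕ) + 1 = (i : ℕ)) ↔ (k = p) := by
          rw [← Fin.val_inj]
          omega
        simp only [hk]
    _ = f p := by rw [Finset.sum_ite_eq']; simp

lemma Smat_mul_Tmat : Smat d * Tmat d = 1 := by
  ext i j
  rw [Smat_mul_apply]
  by_cases h0 : (i : ℕ) = 0
  · rw [sum_pred_zero i h0]
    simp only [Tmat, Matrix.of_apply, Matrix.one_apply, Fin.le_def, ← Fin.val_inj, sub_zero]
    split_ifs <;> first | rfl | omega
  · obtain ⟨m, hm⟩ := Nat.exists_eq_succ_of_ne_zero h0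
    have hmd : m < d := by have := i.isLt; omega
    rw [sum_pred_succ i ⟨m, hmd⟩ (by simp [hm])]
    simp only [Tmat, Matrix.of_apply, Matrix.one_apply, Fin.le_def, ← Fin.val_inj]
    split_ifs <;> first | (exfalso; omega) | norm_num

lemma Tmat_mul_Smat : Tmat d * Smat d = 1 :=
  mul_eq_one_comm.mp Smat_mul_Tmat

lemma isUnit_Tmat : IsUnit (Tmat d) :=
  ⟨⟨Tmat d, Smat d, Tmat_mul_Smat, Smat_mul_Tmat⟩, rfl⟩

lemma Tmat_inv : (Tmat d)⁻¹ = Smat d := Matrix.inv_eq_left_inv Smat_mul_Tmat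

lemma mul_Tmat_apply (M : Matrix (Fin d) (Fin d) ℝ) (a b : Fin d) :
    (M * Tmat d) a b = ∑ k ∈ Finset.Ici b, M a k := by
  rw [Matrix.mul_apply]
  simp only [Tmat, Matrix.of_apply, mul_ite, mul_one, mul_zero]
  calc ∑ k : Fin d, (if b ≤ k then M a k else 0)
      = ∑ k : Fin d, (if k ∈ Finset.Ici b then M a k else 0) :=
        Finset.sum_congr rfl fun k _ => by simp only [Finset.mem_Ici]
    _ = _ := by rw [Finset.sum_ite_mem, Finset.univ_inter]

lemma Tmat_mul_apply (M : Matrix (Fin d) (Fin d) ℝ) (a b : Fin d) :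
    (Tmat d * M) a b = ∑ k ∈ Finset.Iic a, M k b := by
  rw [Matrix.mul_apply]
  simp only [Tmat, Matrix.of_apply, ite_mul, one_mul, zero_mul]
  calc ∑ k : Fin d, (if k ≤ a then M k b else 0)
      = ∑ k : Fin d, (if k ∈ Finset.Iic a then M k b else 0) :=
        Finset.sum_congr rfl fun k _ => by simp only [Finset.mem_Iic]
    _ = _ := by rw [Finset.sum_ite_mem, Finset.univ_inter]

lemma exp_hasSum (A : Matrix (Fin d) (Fin d) ℝ) :
    HasSum (fun n : ℕ => (n.factorial⁻¹ : ℝ) • A ^ n) (exp A) := by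
  letI : SeminormedRing (Matrix (Fin d) (Fin d) ℝ) := Matrix.linftyOpSemiNormedRing
  letI : NormedRing (Matrix (Fin d) (Fin d) ℝ) := Matrix.linftyOpNormedRing
  letI : NormedAlgebra ℝ (Matrix (Fin d) (Fin d) ℝ) := Matrix.linftyOpNormedAlgebra
  exact exp_series_hasSum_exp' (𝕂 := ℝ) A

lemma exp_entry_hasSum (A : Matrix (Fin d) (Fin d) ℝ) (i j : Fin d) :
    HasSum (fun n : ℕ => (n.factorial⁻¹ : ℝ) * ((A ^ n) i j)) (exp A i j) := by
  have h := exp_hasSum A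
  have h1 := Pi.hasSum.mp h i
  have h2 := Pi.hasSum.mp h1 j
  simpa using h2

lemma pow_entry_nonneg {A : Matrix (Fin d) (Fin d) ℝ} (h : ∀ i j, 0 ≤ A i j) :
    ∀ (n : ℕ) (i j : Fin d), 0 ≤ (A ^ n) i j := by
  intro n
  induction n with
  | zero => intro i j; simp [Matrix.one_apply]; split <;> norm_num
  | succ m ih =>
      intro i j
      rw [pow_succ, Matrix.mul_apply]
      exact Finset.sum_nonneg fun k _ => mul_nonneg (ih i k) (h k j)

lemma exp_entry_nonneg_of_nonneg {A : Matrix (Fin d) (Fin d) ℝ} (h : ∀ i j, 0 ≤ A i j)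
    (i j : Fin d) : 0 ≤ exp A i j := by
  rw [← (exp_entry_hasSum A i j).tsum_eq]
  exact tsum_nonneg fun n =>
    mul_nonneg (by positivity) (pow_entry_nonneg h n i j)

lemma exp_entry_nonneg_of_offdiag {A : Matrix (Fin d) (Fin d) ℝ}
    (h : ∀ i j, i ≠ j → 0 ≤ A i j) (i j : Fin d) : 0 ≤ exp A i j := by
  set c : ℝ := ∑ k, |A k k| with hc
  have hck : ∀ k : Fin d, |A k k| ≤ c :=
    fun k => Finset.single_le_sum (f := fun k => |A k k|)
      (fun k _ => abs_nonneg _) (Finset.mem_univ k)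
  have hB : ∀ a b, 0 ≤ (A + c • (1 : Matrix (Fin d) (Fin d) ℝ)) a b := by
    intro a b
    by_cases hab : a = b
    · subst hab
      have := abs_le.mp (hck a)
      simp only [Matrix.add_apply, Matrix.smul_apply, Matrix.one_apply_eq, smul_eq_mul, mul_one]
      linarith
    · simpa [Matrix.add_apply, Matrix.one_apply_ne hab] using h a b hab
  have hsplit : A = (A + c • (1 : Matrix (Fin d) (Fin d) ℝ)) + (-c) • 1 := by
    rw [add_assoc, ← add_smul, add_neg_cancel, zero_smul, add_zero]
  have hdiag : (-c) • (1 : Matrix (Fin d) (Fin d) ℝ) = Matrix.diagonal (fun _ => -c) := by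
    ext a b
    by_cases hab : a = b <;>
      simp [Matrix.smul_apply, Matrix.one_apply, Matrix.diagonal_apply, hab]
  have hcomm : Commute (A + c • (1 : Matrix (Fin d) (Fin d) ℝ)) ((-c) • 1) :=
    (Commute.one_right _).smul_right _
  rw [hsplit, Matrix.exp_add_of_commute _ _ hcomm, hdiag, Matrix.exp_diagonal]
  have hd2 : (exp fun _ : Fin d => -c) = (fun _ : Fin d => Real.exp (-c)) := by
    funext k
    rw [Pi.coe_exp, ← Real.exp_eq_exp_ℝ]
  rw [hd2, Matrix.mul_diagonal]
  exact mul_nonneg (exp_entry_nonneg_of_nonneg hB i j) (Real.exp_pos _).le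

lemma rowsum_pow {A : Matrix (Fin d) (Fin d) ℝ} (hA : ∀ i, ∑ j, A i j = 0) (m : ℕ)
    (i : Fin d) : ∑ j, (A ^ (m + 1)) i j = 0 := by
  rw [pow_succ]
  simp only [Matrix.mul_apply]
  rw [Finset.sum_comm]
  exact Finset.sum_eq_zero fun k _ => by rw [← Finset.mul_sum, hA k, mul_zero]

lemma exp_rowsum {A : Matrix (Fin d) (Fin d) ℝ} (hA : ∀ i, ∑ j, A i j = 0) (i : Fin d) :
    ∑ j, exp A i j = 1 := by
  have h : HasSum (fun n : ℕ => ∑ j, (n.factorial⁻¹ : ℝ) * ((A ^ n) i j))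
      (∑ j, exp A i j) :=
    hasSum_sum fun j _ => exp_entry_hasSum A i j
  have h2 : (fun n : ℕ => ∑ j, (n.factorial⁻¹ : ℝ) * ((A ^ n) i j)) =
      fun n : ℕ => if n = 0 then (1 : ℝ) else 0 := by
    funext n
    cases n with
    | zero => simp [Matrix.one_apply]
    | succ m =>
        rw [← Finset.mul_sum, rowsum_pow hA m i, mul_zero]
        simp
  rw [h2] at h
  exact h.unique (hasSum_ite_eq 0 1)

lemma hasDerivAt_entry (Q S T' : Matrix (Fin d) (Fin d) ℝ) (i j : Fin d) :
    HasDerivAt (fun t : ℝ => (S * exp (t • Q) * T') i j) ((S * Q * T') i j) 0 := by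
  letI : SeminormedRing (Matrix (Fin d) (Fin d) ℝ) := Matrix.linftyOpSemiNormedRing
  letI : NormedRing (Matrix (Fin d) (Fin d) ℝ) := Matrix.linftyOpNormedRing
  letI : NormedAlgebra ℝ (Matrix (Fin d) (Fin d) ℝ) := Matrix.linftyOpNormedAlgebra
  have h1 : HasDerivAt (fun u : ℝ => exp (u • Q)) (exp ((0:ℝ) • Q) * Q) 0 :=
    hasDerivAt_exp_smul_const (𝕂 := ℝ) Q 0
  rw [zero_smul, exp_zero, one_mul] at h1
  let L : Matrix (Fin d) (Fin d) ℝ →ₗ[ℝ] ℝ :=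
    { toFun := fun M => (S * M * T') i j
      map_add' := by intro M N; simp [Matrix.mul_add, Matrix.add_mul]
      map_smul' := by intro c M; simp [mul_smul_comm, smul_mul_assoc] }
  exact (LinearMap.toContinuousLinearMap L).hasFDerivAt.comp_hasDerivAt 0 h1

end Stmt14Aux

open Stmt14Aux NormedSpace

/-- the Markov semigroup `(exp(tQ))_{t ≥ 0}` consists of
monotone Markov matrices iff the generator `Q` is monotone, i.e. all
off-diagonal entries of `T⁻¹·Q·T` are nonnegative. -/
theorem stmt_14 {d : ℕ} (Q : Matrix (Fin d) (Fin d) ℝ) (hQ : IsGenerator Q) :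
    (∀ t : ℝ, 0 ≤ t →
        IsMarkov (NormedSpace.exp (t • Q)) ∧ IsMonotone (NormedSpace.exp (t • Q)))
      ↔ (∀ i j : Fin d, i ≠ j → 0 ≤ ((Tmat d)⁻¹ * Q * Tmat d) i j) := by
  rw [Tmat_inv]
  constructor
  · -- forward direction
    intro h i j hij
    set φ : ℝ → ℝ := fun t => (Smat d * exp (t • Q) * Tmat d) i j with hφ
    have hφ0 : φ 0 = 0 := by
      simp only [hφ, zero_smul, exp_zero, Matrix.mul_one, Smat_mul_Tmat]
      exact Matrix.one_apply_ne hij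
    have hφnn : ∀ s : ℝ, 0 ≤ s → 0 ≤ φ s := by
      intro s hs
      obtain ⟨hMk, hMono⟩ := h s hs
      have hrw : φ s = ((exp (s • Q) * Tmat d) i j
          - ∑ k : Fin d,
              (if (k : ℕ) + 1 = (i : ℕ) then (exp (s • Q) * Tmat d) k j else 0)) := by
        rw [hφ]
        show (Smat d * exp (s • Q) * Tmat d) i j = _
        rw [Matrix.mul_assoc, Smat_mul_apply]
      rw [hrw]
      by_cases h0 : (i : ℕ) = 0
      · rw [sum_pred_zero i h0, sub_zero, mul_Tmat_apply]
        exact Finset.sum_nonneg fun k _ => hMk.1 i k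
      · obtain ⟨m, hm⟩ := Nat.exists_eq_succ_of_ne_zero h0
        have hmd : m < d := by have := i.isLt; omega
        rw [sum_pred_succ i ⟨m, hmd⟩ (by simp [hm]), sub_nonneg,
          mul_Tmat_apply, mul_Tmat_apply]
        exact hMono ⟨m, hmd⟩ i (by rw [Fin.le_def]; simp; omega) j
    have hd : HasDerivAt φ ((Smat d * Q * Tmat d) i j) 0 :=
      hasDerivAt_entry Q (Smat d) (Tmat d) i j
    have hT : Filter.Tendsto (slope φ 0) (nhdsWithin 0 (Set.Ioi 0))
        (nhds ((Smat d * Q * Tmat d) i j)) :=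
      (hasDerivAt_iff_tendsto_slope.mp hd).mono_left
        (nhdsWithin_mono 0 fun x hx => Set.mem_compl_singleton_iff.mpr (ne_of_gt hx))
    refine ge_of_tendsto hT ?_
    filter_upwards [self_mem_nhdsWithin] with x hx
    rw [slope_def_field, hφ0, sub_zero, sub_zero]
    exact div_nonneg (hφnn x (le_of_lt hx)) (le_of_lt hx)
  · -- backward direction
    intro h t ht
    have hMarkov : IsMarkov (exp (t • Q)) := by
      constructor
      · refine exp_entry_nonneg_of_offdiag (fun a b hab => ?_)
        simp only [Matrix.smul_apply, smul_eq_mul]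
        exact mul_nonneg ht (hQ.1 a b hab)
      · refine exp_rowsum (fun a => ?_)
        simp only [Matrix.smul_apply, smul_eq_mul, ← Finset.mul_sum, hQ.2 a, mul_zero]
    refine ⟨hMarkov, ?_⟩
    have harg : Smat d * (t • Q) * Tmat d = t • (Smat d * Q * Tmat d) := by
      rw [mul_smul_comm, smul_mul_assoc]
    have hconj : exp (t • (Smat d * Q * Tmat d)) = Smat d * exp (t • Q) * Tmat d := by
      have h2 := Matrix.exp_conj' (Tmat d) (t • Q) isUnit_Tmat
      rw [Tmat_inv] at h2
      rw [← harg]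
      exact h2
    have hEnn : ∀ p q : Fin d, 0 ≤ exp (t • (Smat d * Q * Tmat d)) p q := by
      refine exp_entry_nonneg_of_offdiag (fun a b hab => ?_)
      simp only [Matrix.smul_apply, smul_eq_mul]
      exact mul_nonneg ht (h a b hab)
    have hMT : exp (t • Q) * Tmat d = Tmat d * exp (t • (Smat d * Q * Tmat d)) := by
      rw [hconj]
      simp only [← Matrix.mul_assoc]
      rw [Tmat_mul_Smat, Matrix.one_mul]
    intro a b hab m
    rw [← mul_Tmat_apply, ← mul_Tmat_apply, hMT, Tmat_mul_apply, Tmat_mul_apply]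
    exact Finset.sum_le_sum_of_subset_of_nonneg (Finset.Iic_subset_Iic.mpr hab)
      (fun k _ _ => hEnn k m)
end

section
/- Let P₀ and P be d×d Markov matrices with P₀² = P₀ and P₀·P = P·P₀ = P, and for t ≥ 0 set M(t) = e^{-t}·(P₀ - I + exp(t·P)). Then: (1) M(0) = P₀; (2) M(t)·M(s) = M(t+s) for all t,s ≥ 0; (3) M(t) is a Markov matrix for every t ≥ 0; (4) M(t) = e^{-t}·(P₀ - I) + exp(t·A) = P₀·exp(t·A) for all t ≥ 0, where A = P - I; (5) P = P₀ if and only if M(t) = P₀ for all t ≥ 0; (6) for t ≥ 0, M(t) is idempotent if and only if M(t) = P₀. -/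
open Matrix

section Stmt15Aux

open NormedSpace Nat

variable {d : ℕ}

private lemma matexp_hasSum (A : Matrix (Fin d) (Fin d) ℝ) :
    HasSum (fun n : ℕ => (n !⁻¹ : ℝ) • A ^ n) (exp A) := by
  letI : SeminormedRing (Matrix (Fin d) (Fin d) ℝ) := Matrix.linftyOpSemiNormedRing
  letI : NormedRing (Matrix (Fin d) (Fin d) ℝ) := Matrix.linftyOpNormedRing
  letI : NormedAlgebra ℝ (Matrix (Fin d) (Fin d) ℝ) := Matrix.linftyOpNormedAlgebra
  exact exp_series_hasSum_exp' A

private lemma realexp_hasSum (t : ℝ) :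
    HasSum (fun n : ℕ => (n !⁻¹ : ℝ) * t ^ n) (Real.exp t) := by
  have := exp_series_hasSum_exp' (𝕂 := ℝ) t
  simpa [Real.exp_eq_exp_ℝ, smul_eq_mul] using this

private lemma stmt15_key {P₀ P : Matrix (Fin d) (Fin d) ℝ} (hPP₀ : P₀ * P = P) (t : ℝ) :
    P₀ * exp (t • P) = P₀ - 1 + exp (t • P) := by
  have hE := matexp_hasSum (t • P)
  have h1 := hE.mul_left P₀
  have h2 := hE.add (hasSum_ite_eq (0 : ℕ) (P₀ - 1))
  have hfe : (fun n : ℕ => P₀ * ((n !⁻¹ : ℝ) • (t • P) ^ n)) =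
      fun n : ℕ => (n !⁻¹ : ℝ) • (t • P) ^ n + (if n = 0 then P₀ - 1 else 0) := by
    funext n
    cases n with
    | zero => simp
    | succ m =>
      have hPk : ∀ k : ℕ, P₀ * P ^ (k + 1) = P ^ (k + 1) := by
        intro k
        induction k with
        | zero => simpa using hPP₀
        | succ j ih => rw [pow_succ, ← mul_assoc, ih]
      have hpow : P₀ * (t • P) ^ (m + 1) = (t • P) ^ (m + 1) := by
        rw [smul_pow, mul_smul_comm, hPk]
      rw [mul_smul_comm, hpow, if_neg (Nat.succ_ne_zero m), add_zero]
  rw [hfe] at h1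
  rw [h1.unique h2, add_comm]

private lemma stmt15_exp_shift (P : Matrix (Fin d) (Fin d) ℝ) (t : ℝ) :
    exp (t • (P - 1)) = Real.exp (-t) • exp (t • P) := by
  letI : SeminormedRing (Matrix (Fin d) (Fin d) ℝ) := Matrix.linftyOpSemiNormedRing
  letI : NormedRing (Matrix (Fin d) (Fin d) ℝ) := Matrix.linftyOpNormedRing
  letI : NormedAlgebra ℝ (Matrix (Fin d) (Fin d) ℝ) := Matrix.linftyOpNormedAlgebra
  have hsplit : t • (P - 1) = t • P + (-t) • (1 : Matrix (Fin d) (Fin d) ℝ) := by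
    rw [smul_sub, neg_smul, ← sub_eq_add_neg]
  have hcomm : Commute (t • P) ((-t) • (1 : Matrix (Fin d) (Fin d) ℝ)) :=
    ((Commute.one_right (t • P)).smul_right (-t))
  rw [hsplit, Matrix.exp_add_of_commute _ _ hcomm]
  have h1 : ((-t) • (1 : Matrix (Fin d) (Fin d) ℝ)) = algebraMap ℝ _ (-t) := by
    rw [Algebra.algebraMap_eq_smul_one]
  rw [h1]
  erw [← algebraMap_exp_comm]
  rw [← Real.exp_eq_exp_ℝ, Algebra.algebraMap_eq_smul_one,
    mul_smul_comm, mul_one]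

private lemma stmt15_exp_add_smul (P : Matrix (Fin d) (Fin d) ℝ) (t s : ℝ) :
    exp ((t + s) • P) = exp (t • P) * exp (s • P) := by
  letI : SeminormedRing (Matrix (Fin d) (Fin d) ℝ) := Matrix.linftyOpSemiNormedRing
  letI : NormedRing (Matrix (Fin d) (Fin d) ℝ) := Matrix.linftyOpNormedRing
  letI : NormedAlgebra ℝ (Matrix (Fin d) (Fin d) ℝ) := Matrix.linftyOpNormedAlgebra
  rw [add_smul]
  exact Matrix.exp_add_of_commute _ _ (((Commute.refl P).smul_left t).smul_right s)

private lemma stmt15_exp_mul_exp_neg (A : Matrix (Fin d) (Fin d) ℝ) :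
    exp A * exp (-A) = 1 := by
  letI : SeminormedRing (Matrix (Fin d) (Fin d) ℝ) := Matrix.linftyOpSemiNormedRing
  letI : NormedRing (Matrix (Fin d) (Fin d) ℝ) := Matrix.linftyOpNormedRing
  letI : NormedAlgebra ℝ (Matrix (Fin d) (Fin d) ℝ) := Matrix.linftyOpNormedAlgebra
  rw [← Matrix.exp_add_of_commute _ _ (Commute.neg_right (Commute.refl A)), add_neg_cancel, exp_zero]

private lemma stmt15_exp_idem {P₀ : Matrix (Fin d) (Fin d) ℝ} (hidem : P₀ * P₀ = P₀) (t : ℝ) :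
    exp (t • P₀) = Real.exp t • P₀ + (1 - P₀) := by
  have hE := matexp_hasSum (t • P₀)
  have hpow : ∀ m : ℕ, P₀ ^ (m + 1) = P₀ := by
    intro m
    induction m with
    | zero => simp
    | succ k ih => rw [pow_succ, ih, hidem]
  have h2 := ((realexp_hasSum t).smul_const P₀).add
    (hasSum_ite_eq (0 : ℕ) ((1 : Matrix (Fin d) (Fin d) ℝ) - P₀))
  have hfe : (fun n : ℕ => (n !⁻¹ : ℝ) • (t • P₀) ^ n) =
      fun n : ℕ => ((n !⁻¹ : ℝ) * t ^ n) • P₀ +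
        (if n = 0 then (1 : Matrix (Fin d) (Fin d) ℝ) - P₀ else 0) := by
    funext n
    cases n with
    | zero => simp
    | succ m =>
      rw [smul_pow, hpow, if_neg (Nat.succ_ne_zero m), add_zero, smul_smul]
  rw [hfe] at hE
  exact hE.unique h2

private lemma stmt15_hasSum_entry {f : ℕ → Matrix (Fin d) (Fin d) ℝ}
    {A : Matrix (Fin d) (Fin d) ℝ}
    (h : HasSum f A) (i j : Fin d) : HasSum (fun n => f n i j) (A i j) := by
  have hc : Continuous (fun M : Matrix (Fin d) (Fin d) ℝ => M i j) :=
    (continuous_apply j).comp (continuous_apply i)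
  exact h.map (AddMonoidHom.mk' (fun M : Matrix (Fin d) (Fin d) ℝ => M i j)
    (fun _ _ => rfl)) hc

private lemma stmt15_eq_of_exp_eq {P₀ P : Matrix (Fin d) (Fin d) ℝ}
    (h : ∀ t : ℝ, 0 ≤ t → exp (t • P) = Real.exp t • P₀ + (1 - P₀)) :
    P = P₀ := by
  letI : SeminormedRing (Matrix (Fin d) (Fin d) ℝ) := Matrix.linftyOpSemiNormedRing
  letI : NormedRing (Matrix (Fin d) (Fin d) ℝ) := Matrix.linftyOpNormedRing
  letI : NormedAlgebra ℝ (Matrix (Fin d) (Fin d) ℝ) := Matrix.linftyOpNormedAlgebra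
  have h1 : HasDerivWithinAt (fun u : ℝ => exp (u • P)) P (Set.Ici (0:ℝ)) 0 := by
    have := (hasDerivAt_exp_smul_const (𝕂 := ℝ) P (0 : ℝ)).hasDerivWithinAt
      (s := Set.Ici (0:ℝ))
    simp at this; exact this
  have h2 : HasDerivAt (fun u : ℝ => Real.exp u • P₀ + (1 - P₀)) P₀ 0 := by
    have := ((Real.hasDerivAt_exp 0).smul_const P₀).add_const (1 - P₀)
    rw [Real.exp_zero, one_smul] at this; exact this
  have h2' : HasDerivWithinAt (fun u : ℝ => exp (u • P)) P₀ (Set.Ici (0:ℝ)) 0 :=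
    (h2.hasDerivWithinAt).congr (fun t ht => h t ht) (h 0 le_rfl)
  have hu : UniqueDiffWithinAt ℝ (Set.Ici (0:ℝ)) 0 := uniqueDiffOn_Ici 0 0 Set.self_mem_Ici
  have := h1.derivWithin hu
  rw [h2'.derivWithin hu] at this
  exact this.symm

end Stmt15Aux

/-- the (pseudo-)Poissonian family
`M(t) = e^{-t}(P₀ - I + exp(tP))` attached to an idempotent `P₀` and a Markov
matrix `P` with `P₀P = PP₀ = P` is a continuous monoid of Markov matrices with
neutral element `P₀`, and its further properties (1)–(6). -/
theorem stmt_15 {d : ℕ} (P₀ P : Matrix (Fin d) (Fin d) ℝ)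
    (hP₀ : IsMarkov P₀) (hP : IsMarkov P)
    (hidem : P₀ * P₀ = P₀)
    (hPP₀ : P₀ * P = P) (hP₀P : P * P₀ = P)
    (Mt : ℝ → Matrix (Fin d) (Fin d) ℝ)
    (hMt : ∀ t : ℝ, Mt t =
      Real.exp (-t) • (P₀ - 1 + NormedSpace.exp (t • P))) :
    Mt 0 = P₀ ∧
    (∀ t s : ℝ, 0 ≤ t → 0 ≤ s → Mt t * Mt s = Mt (t + s)) ∧
    (∀ t : ℝ, 0 ≤ t → IsMarkov (Mt t)) ∧
    (∀ t : ℝ, 0 ≤ t →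
      Mt t = Real.exp (-t) • (P₀ - 1) + NormedSpace.exp (t • (P - 1)) ∧
      Mt t = P₀ * NormedSpace.exp (t • (P - 1))) ∧
    (P = P₀ ↔ ∀ t : ℝ, 0 ≤ t → Mt t = P₀) ∧
    (∀ t : ℝ, 0 ≤ t → (Mt t * Mt t = Mt t ↔ Mt t = P₀)) := by
  have hcomm : Commute P₀ P := hPP₀.trans hP₀P.symm
  have hMtP0 : ∀ t : ℝ, Mt t = Real.exp (-t) • (P₀ * NormedSpace.exp (t • P)) := by
    intro t; rw [hMt t, stmt15_key hPP₀]
  -- part 1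
  have part1 : Mt 0 = P₀ := by
    rw [hMt 0]
    simp
  -- part 2
  have part2 : ∀ t s : ℝ, 0 ≤ t → 0 ≤ s → Mt t * Mt s = Mt (t + s) := by
    intro t s _ _
    rw [hMtP0 t, hMtP0 s, hMtP0 (t + s), Matrix.smul_mul, Matrix.mul_smul, smul_smul]
    congr 1
    · rw [← Real.exp_add]; ring_nf
    · have hc : Commute P₀ (NormedSpace.exp (t • P)) :=
        (hcomm.smul_right t).exp_right
      rw [mul_assoc, ← mul_assoc (NormedSpace.exp (t • P)) P₀, ← hc.eq,
        mul_assoc P₀ (NormedSpace.exp (t • P)), ← mul_assoc P₀ P₀, hidem,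
        ← stmt15_exp_add_smul]
  -- entrywise facts about powers of P
  have hPnn : ∀ (n : ℕ) (i j : Fin d), 0 ≤ (P ^ n) i j := by
    intro n
    induction n with
    | zero =>
      intro i j
      by_cases h : i = j <;> simp [Matrix.one_apply, h]
    | succ k ih =>
      intro i j
      rw [pow_succ, Matrix.mul_apply]
      exact Finset.sum_nonneg fun k' _ => mul_nonneg (ih i k') (hP.1 k' j)
  have hPn1 : ∀ (n : ℕ) (i : Fin d), ∑ j, (P ^ n) i j = 1 := by
    intro n
    induction n with
    | zero => intro i; simp [Matrix.one_apply]
    | succ k ih =>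
      intro i
      rw [pow_succ]
      simp only [Matrix.mul_apply]
      rw [Finset.sum_comm]
      simp_rw [← Finset.mul_sum, hP.2, mul_one]
      exact ih i
  -- entrywise HasSum for exp (t • P)
  have hEij : ∀ (t : ℝ) (i j : Fin d),
      HasSum (fun n : ℕ => ((Nat.factorial n : ℝ))⁻¹ * (t ^ n * (P ^ n) i j))
        (NormedSpace.exp (t • P) i j) := by
    intro t i j
    have := stmt15_hasSum_entry (matexp_hasSum (t • P)) i j
    simpa [smul_pow, Matrix.smul_apply, smul_eq_mul] using this
  -- part 3
  have part3 : ∀ t : ℝ, 0 ≤ t → IsMarkov (Mt t) := by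
    intro t ht
    constructor
    · intro i j
      rw [hMt t]
      simp only [Matrix.smul_apply, Matrix.add_apply, Matrix.sub_apply, smul_eq_mul]
      apply mul_nonneg (Real.exp_nonneg _)
      have h1 : (1 : Matrix (Fin d) (Fin d) ℝ) i j ≤ NormedSpace.exp (t • P) i j := by
        have hterm : ∀ n ∉ ({0} : Finset ℕ),
            0 ≤ ((Nat.factorial n : ℝ))⁻¹ * (t ^ n * (P ^ n) i j) := by
          intro n _
          exact mul_nonneg (by positivity) (mul_nonneg (pow_nonneg ht n) (hPnn n i j))
        have := sum_le_hasSum ({0} : Finset ℕ) hterm (hEij t i j)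
        simpa using this
      have h2 := hP₀.1 i j
      linarith
    · intro i
      have hrow : HasSum
          (fun n : ℕ => ∑ j, ((Nat.factorial n : ℝ))⁻¹ * (t ^ n * (P ^ n) i j))
          (∑ j, NormedSpace.exp (t • P) i j) :=
        hasSum_sum fun j _ => hEij t i j
      have h2 : (fun n : ℕ => ∑ j, ((Nat.factorial n : ℝ))⁻¹ * (t ^ n * (P ^ n) i j)) =
          fun n : ℕ => ((Nat.factorial n : ℝ))⁻¹ * t ^ n := by
        funext n
        simp_rw [← Finset.mul_sum, hPn1 n i, mul_one]
      rw [h2] at hrow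
      have hsum : ∑ j, NormedSpace.exp (t • P) i j = Real.exp t :=
        hrow.unique (realexp_hasSum t)
      rw [hMt t]
      simp only [Matrix.smul_apply, Matrix.add_apply, Matrix.sub_apply, smul_eq_mul]
      rw [← Finset.mul_sum, Finset.sum_add_distrib, Finset.sum_sub_distrib, hP₀.2 i, hsum]
      have hone : ∑ j, (1 : Matrix (Fin d) (Fin d) ℝ) i j = 1 := by
        simp [Matrix.one_apply]
      rw [hone]
      rw [show (1 : ℝ) - 1 + Real.exp t = Real.exp t by ring, ← Real.exp_add]
      simp
  -- part 4
  have part4 : ∀ t : ℝ, 0 ≤ t →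
      Mt t = Real.exp (-t) • (P₀ - 1) + NormedSpace.exp (t • (P - 1)) ∧
      Mt t = P₀ * NormedSpace.exp (t • (P - 1)) := by
    intro t _
    constructor
    · rw [hMt t, stmt15_exp_shift, smul_add]
    · rw [stmt15_exp_shift, mul_smul_comm, stmt15_key hPP₀, hMt t]
  -- part 5
  have part5 : P = P₀ ↔ ∀ t : ℝ, 0 ≤ t → Mt t = P₀ := by
    constructor
    · rintro rfl t _
      rw [hMt t, stmt15_exp_idem hidem t]
      have h3 : P - 1 + (Real.exp t • P + (1 - P)) = Real.exp t • P := by abel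
      rw [h3, smul_smul, ← Real.exp_add, neg_add_cancel, Real.exp_zero, one_smul]
    · intro h
      apply stmt15_eq_of_exp_eq
      intro t ht
      have h1 := h t ht
      rw [hMt t] at h1
      have h2 := congrArg (fun M => Real.exp t • M) h1
      simp only [smul_smul, ← Real.exp_add, add_neg_cancel, Real.exp_zero, one_smul] at h2
      have h3 : NormedSpace.exp (t • P) = Real.exp t • P₀ - (P₀ - 1) := by
        rw [← h2]; abel
      rw [h3]; abel
  -- part 6
  have part6 : ∀ t : ℝ, 0 ≤ t → (Mt t * Mt t = Mt t ↔ Mt t = P₀) := by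
    intro t ht
    constructor
    · intro hid
      have heq : Mt (t + t) = Mt t := (part2 t t ht ht).symm.trans hid
      rw [hMtP0 (t + t), hMtP0 t, stmt15_exp_add_smul P t t] at heq
      have hmul := congrArg (fun M => M * NormedSpace.exp (-(t • P))) heq
      simp only [Matrix.smul_mul, mul_assoc, stmt15_exp_mul_exp_neg, mul_one] at hmul
      -- hmul : e^{-(t+t)} • (P₀ * E t) = e^{-t} • P₀
      have h4 := congrArg (fun M => Real.exp (t + t) • M) hmul
      simp only [smul_smul, ← Real.exp_add, add_neg_cancel, Real.exp_zero, one_smul] at h4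
      -- h4 : P₀ * E t = exp(t + t + -t) • P₀
      rw [hMtP0 t, h4, smul_smul, ← Real.exp_add]
      rw [show -t + (t + t + -t) = 0 by ring, Real.exp_zero, one_smul]
    · intro h; rw [h, hidem]
  exact ⟨part1, part2, part3, part4, part5, part6⟩
end

section
/- Let P₀ and P be d×d Markov matrices with P₀² = P₀ and P₀·P = P·P₀ = P, and for t ≥ 0 set M(t) = e^{-t}·(P₀ - I + exp(t·P)). Then exactly one of the following holds: either det(M(t)) > 0 for all t ≥ 0, which happens if and only if P₀ = I; or det(M(t)) = 0 for all t ≥ 0, which happens if and only if P₀ ≠ I (equivalently, P₀ is singular). -/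
open Matrix

lemma mul_exp_eq_of_mul_eq_zero {d : ℕ} (A B : Matrix (Fin d) (Fin d) ℝ)
    (h : A * B = 0) : A * NormedSpace.exp B = A := by
  letI : SeminormedRing (Matrix (Fin d) (Fin d) ℝ) := Matrix.linftyOpSemiNormedRing
  letI : NormedRing (Matrix (Fin d) (Fin d) ℝ) := Matrix.linftyOpNormedRing
  letI : NormedAlgebra ℝ (Matrix (Fin d) (Fin d) ℝ) := Matrix.linftyOpNormedAlgebra
  rw [NormedSpace.exp_eq_tsum (𝕂 := ℝ)]
  have hsum : Summable fun n : ℕ => (n.factorial : ℝ)⁻¹ • B ^ n :=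
    NormedSpace.expSeries_summable' B
  rw [← hsum.tsum_mul_left A]
  rw [tsum_eq_single 0 ?_]
  · simp
  · intro n hn
    obtain ⟨m, rfl⟩ := Nat.exists_eq_succ_of_ne_zero hn
    rw [mul_smul_comm, pow_succ', ← mul_assoc, h, zero_mul, smul_zero]

lemma det_exp_pos {d : ℕ} (B : Matrix (Fin d) (Fin d) ℝ) :
    0 < (NormedSpace.exp B).det := by
  have hB : B = (2⁻¹ : ℝ) • B + (2⁻¹ : ℝ) • B := by
    rw [← add_smul]; norm_num
  have hcomm : Commute ((2⁻¹ : ℝ) • B) ((2⁻¹ : ℝ) • B) := Commute.refl _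
  have hmul := Matrix.exp_add_of_commute _ _ hcomm
  have hne : (NormedSpace.exp ((2⁻¹ : ℝ) • B)).det ≠ 0 := by
    have := (Matrix.isUnit_iff_isUnit_det _).mp (Matrix.isUnit_exp ((2⁻¹ : ℝ) • B))
    exact this.ne_zero
  have hEB : NormedSpace.exp B
      = NormedSpace.exp ((2⁻¹ : ℝ) • B) * NormedSpace.exp ((2⁻¹ : ℝ) • B) := by
    conv_lhs => rw [hB]
    exact hmul
  rw [hEB, Matrix.det_mul, ← sq]
  exact lt_of_le_of_ne (sq_nonneg _) (Ne.symm (pow_ne_zero 2 hne))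

/-- for the family `M(t) = e^{-t}(P₀ - I + exp(tP))`, either
`det(M(t)) > 0` for all `t ≥ 0` (which happens iff `P₀ = I`), or
`det(M(t)) = 0` for all `t ≥ 0` (which happens iff `P₀ ≠ I`, equivalently
iff `P₀` is singular). -/
theorem stmt_16 {d : ℕ} (P₀ P : Matrix (Fin d) (Fin d) ℝ)
    (hP₀ : IsMarkov P₀) (hP : IsMarkov P)
    (hidem : P₀ * P₀ = P₀)
    (hPP₀ : P₀ * P = P) (hP₀P : P * P₀ = P)
    (Mt : ℝ → Matrix (Fin d) (Fin d) ℝ)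
    (hMt : ∀ t : ℝ, Mt t =
      Real.exp (-t) • (P₀ - 1 + NormedSpace.exp (t • P))) :
    ((∀ t : ℝ, 0 ≤ t → 0 < (Mt t).det) ↔ P₀ = 1) ∧
    ((∀ t : ℝ, 0 ≤ t → (Mt t).det = 0) ↔ P₀ ≠ 1) ∧
    (P₀ ≠ 1 ↔ P₀.det = 0) := by
  -- Key factorization: Mt t = e^{-t} • (P₀ * exp (t • P))
  have key : ∀ t : ℝ, Mt t = Real.exp (-t) • (P₀ * NormedSpace.exp (t • P)) := by
    intro t
    have h0 : (P₀ - 1) * (t • P) = 0 := by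
      rw [mul_smul_comm, sub_mul, one_mul, hPP₀, sub_self, smul_zero]
    have h1 := mul_exp_eq_of_mul_eq_zero _ _ h0
    rw [hMt t]
    congr 1
    calc P₀ - 1 + NormedSpace.exp (t • P)
        = (P₀ - 1) * NormedSpace.exp (t • P) + 1 * NormedSpace.exp (t • P) := by
          rw [h1, one_mul]
      _ = P₀ * NormedSpace.exp (t • P) := by rw [← add_mul, sub_add_cancel]
  have hdet : ∀ t : ℝ, (Mt t).det
      = Real.exp (-t) ^ d * (P₀.det * (NormedSpace.exp (t • P)).det) := by
    intro t
    rw [key t, Matrix.det_smul, Matrix.det_mul]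
    simp [Fintype.card_fin]
  have hdet0 : (Mt 0).det = P₀.det := by
    have h0 : ((0:ℝ) • P) = 0 := by simp
    rw [hdet 0, h0, NormedSpace.exp_zero]
    simp
  have hd2 : P₀.det = 0 ∨ P₀.det = 1 := by
    have hsq : P₀.det * P₀.det = P₀.det := by rw [← Matrix.det_mul, hidem]
    have h2 : P₀.det * (P₀.det - 1) = 0 := by linear_combination hsq
    rcases mul_eq_zero.mp h2 with h | h
    · exact Or.inl h
    · exact Or.inr (by linarith [sub_eq_zero.mp h])
  have hiff : P₀ = 1 ↔ P₀.det ≠ 0 := by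
    constructor
    · rintro rfl; simp
    · intro h
      have hu : IsUnit P₀.det := isUnit_iff_ne_zero.mpr h
      have hinv : P₀⁻¹ * P₀ = 1 := Matrix.nonsing_inv_mul P₀ hu
      calc P₀ = 1 * P₀ := (one_mul _).symm
        _ = (P₀⁻¹ * P₀) * P₀ := by rw [hinv]
        _ = P₀⁻¹ * (P₀ * P₀) := by rw [Matrix.mul_assoc]
        _ = P₀⁻¹ * P₀ := by rw [hidem]
        _ = 1 := hinv
  refine ⟨⟨fun h => ?_, fun h t ht => ?_⟩, ⟨fun h => ?_, fun h t ht => ?_⟩, ?_⟩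
  · have := h 0 le_rfl
    rw [hdet0] at this
    exact hiff.mpr this.ne'
  · rw [hdet t]
    have h1 : P₀.det = 1 := by rw [h]; simp
    rw [h1]
    have := det_exp_pos (t • P)
    positivity
  · intro hP1
    have := h 0 le_rfl
    rw [hdet0, hP1, Matrix.det_one] at this
    exact one_ne_zero this
  · have hz : P₀.det = 0 := by
      rcases hd2 with h0 | h0
      · exact h0
      · exact absurd (hiff.mpr (by rw [h0]; exact one_ne_zero)) h
    rw [hdet t, hz]
    ring
  · constructor
    · intro h
      rcases hd2 with h0 | h0
      · exact h0
      · exact absurd (hiff.mpr (by rw [h0]; exact one_ne_zero)) h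
    · intro h h1
      exact (hiff.mp h1) h
end

section
/- Let M be a 3×3 monotone Markov matrix. Then all complex eigenvalues of M are real; explicitly, besides the eigenvalue 1, the other two eigenvalues are (1/2)·(trace(M) - 1 ± √Δ) with discriminant Δ = (trace(M) - 1)² - 4·det(M) ≥ 0. At most one eigenvalue of M is negative, and M has a negative eigenvalue if and only if det(M) < 0. Furthermore, if Q is a 3×3 monotone Markov generator, then all eigenvalues of Q are real and nonpositive. -/
open Matrix Polynomial

theorem stmt17_charpoly_fac3 (A : Matrix (Fin 3) (Fin 3) ℂ) (r u v : ℂ)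
    (h0 : A 0 0 + A 0 1 + A 0 2 = r)
    (h1 : A 1 0 + A 1 1 + A 1 2 = r)
    (h2 : A 2 0 + A 2 1 + A 2 2 = r)
    (hu : u + v = A 0 0 + A 1 1 + A 2 2 - r)
    (hv : u * v = ((A 1 1 + A 1 2) - (A 0 1 + A 0 2)) * (A 2 2 - A 1 2)
        - (A 1 2 - A 0 2) * ((A 2 1 + A 2 2) - (A 1 1 + A 1 2))) :
    A.charpoly = (X - C r) * (X - C u) * (X - C v) := by
  have e0 : A 0 2 = r - A 0 0 - A 0 1 := by linear_combination h0
  have e1 : A 1 2 = r - A 1 0 - A 1 1 := by linear_combination h1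
  have e2 : A 2 2 = r - A 2 0 - A 2 1 := by linear_combination h2
  rw [Matrix.charpoly, Matrix.det_fin_three]
  simp only [charmatrix_apply_eq, charmatrix_apply_ne _ _ _ (by decide : (0:Fin 3) ≠ 1),
    charmatrix_apply_ne _ _ _ (by decide : (0:Fin 3) ≠ 2),
    charmatrix_apply_ne _ _ _ (by decide : (1:Fin 3) ≠ 0),
    charmatrix_apply_ne _ _ _ (by decide : (1:Fin 3) ≠ 2),
    charmatrix_apply_ne _ _ _ (by decide : (2:Fin 3) ≠ 0),
    charmatrix_apply_ne _ _ _ (by decide : (2:Fin 3) ≠ 1)]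
  rw [e2] at hu
  rw [e0, e1, e2] at hv
  rw [e0, e1, e2]
  simp only [map_sub, map_add]
  have hu' := congrArg (C : ℂ →+* ℂ[X]) hu
  have hv' := congrArg (C : ℂ →+* ℂ[X]) hv
  simp only [map_add, map_sub, _root_.map_mul] at hu' hv'
  linear_combination (X^2 - C r * X) * hu' + (C r - X) * hv'

theorem stmt17_roots_three (r u v : ℂ) :
    ((X - C r) * (X - C u) * (X - C v)).roots = {r, u, v} := by
  rw [Polynomial.roots_mul (mul_ne_zero (mul_ne_zero (Polynomial.X_sub_C_ne_zero r)
      (Polynomial.X_sub_C_ne_zero u)) (Polynomial.X_sub_C_ne_zero v)),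
    Polynomial.roots_mul (mul_ne_zero (Polynomial.X_sub_C_ne_zero r)
      (Polynomial.X_sub_C_ne_zero u)),
    Polynomial.roots_X_sub_C, Polynomial.roots_X_sub_C, Polynomial.roots_X_sub_C]
  rfl

theorem stmt17_master (A : Matrix (Fin 3) (Fin 3) ℝ) (r p : ℝ)
    (h0 : A 0 0 + A 0 1 + A 0 2 = r)
    (h1 : A 1 0 + A 1 1 + A 1 2 = r)
    (h2 : A 2 0 + A 2 1 + A 2 2 = r)
    (hp : p = ((A 1 1 + A 1 2) - (A 0 1 + A 0 2)) * (A 2 2 - A 1 2)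
        - (A 1 2 - A 0 2) * ((A 2 1 + A 2 2) - (A 1 1 + A 1 2)))
    (hc : 0 ≤ A 1 2 - A 0 2)
    (hd : 0 ≤ (A 2 1 + A 2 2) - (A 1 1 + A 1 2)) :
    0 ≤ (Matrix.trace A - r) ^ 2 - 4 * p ∧
    ((A.map (Complex.ofReal ·)).charpoly).roots =
      {((r : ℝ) : ℂ),
       (((Matrix.trace A - r + Real.sqrt ((Matrix.trace A - r) ^ 2 - 4 * p)) / 2 : ℝ) : ℂ),
       (((Matrix.trace A - r - Real.sqrt ((Matrix.trace A - r) ^ 2 - 4 * p)) / 2 : ℝ) : ℂ)} := by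
  set a : ℝ := (A 1 1 + A 1 2) - (A 0 1 + A 0 2) with ha
  set b : ℝ := A 2 2 - A 1 2 with hb
  set c : ℝ := A 1 2 - A 0 2 with hcc
  set d : ℝ := (A 2 1 + A 2 2) - (A 1 1 + A 1 2) with hdd
  have hs : Matrix.trace A - r = a + b := by
    rw [Matrix.trace_fin_three]; rw [ha, hb]; linarith
  have hΔeq : (Matrix.trace A - r) ^ 2 - 4 * p = (a - b) ^ 2 + 4 * (c * d) := by
    rw [hs, hp]; ring
  have hΔnn : 0 ≤ (Matrix.trace A - r) ^ 2 - 4 * p := by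
    rw [hΔeq]; nlinarith [sq_nonneg (a - b), mul_nonneg hc hd]
  refine ⟨hΔnn, ?_⟩
  set R : ℝ := Real.sqrt ((Matrix.trace A - r) ^ 2 - 4 * p) with hR
  have hR2 : R ^ 2 = (Matrix.trace A - r) ^ 2 - 4 * p := Real.sq_sqrt hΔnn
  set u : ℝ := (Matrix.trace A - r + R) / 2 with hu
  set v : ℝ := (Matrix.trace A - r - R) / 2 with hv
  have hsum : u + v = A 0 0 + A 1 1 + A 2 2 - r := by
    rw [hu, hv]
    have := hs
    rw [Matrix.trace_fin_three] at this ⊢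
    ring
  have hprod : u * v = a * b - c * d := by
    rw [← hp, hu, hv]
    linear_combination (-(1:ℝ)/4) * hR2
  have hmap : ∀ i j, (A.map (Complex.ofReal ·)) i j = ((A i j : ℝ) : ℂ) := by
    intro i j; simp [Matrix.map_apply]
  have hfac := stmt17_charpoly_fac3 (A.map (Complex.ofReal ·)) r u v
    (by rw [hmap, hmap, hmap]; exact_mod_cast congrArg Complex.ofReal h0)
    (by rw [hmap, hmap, hmap]; exact_mod_cast congrArg Complex.ofReal h1)
    (by rw [hmap, hmap, hmap]; exact_mod_cast congrArg Complex.ofReal h2)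
    (by simp only [hmap]; exact_mod_cast congrArg Complex.ofReal hsum)
    (by simp only [hmap]; rw [ha, hb, hcc, hdd] at hprod
        exact_mod_cast congrArg Complex.ofReal hprod)
  rw [hfac, stmt17_roots_three]

/-- the eigenvalues of a monotone `3×3` Markov matrix are real,
given explicitly (besides `1`) by `(tr(M)-1 ± √Δ)/2` with
`Δ = (tr(M)-1)² - 4·det(M) ≥ 0`; at most one of them is negative, which
happens iff `det(M) < 0`.  Moreover, the eigenvalues of a monotone `3×3`
Markov generator are real and nonpositive. -/
theorem stmt_17 (M : Matrix (Fin 3) (Fin 3) ℝ)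
    (hM : IsMarkov M) (hmono : IsMonotone M) :
    (∀ z : ℂ, ((M.map (Complex.ofReal ·)).charpoly).IsRoot z → z.im = 0) ∧
    0 ≤ (Matrix.trace M - 1) ^ 2 - 4 * M.det ∧
    ((M.map (Complex.ofReal ·)).charpoly).roots =
      {(1 : ℂ),
       (((Matrix.trace M - 1 +
          Real.sqrt ((Matrix.trace M - 1) ^ 2 - 4 * M.det)) / 2 : ℝ) : ℂ),
       (((Matrix.trace M - 1 -
          Real.sqrt ((Matrix.trace M - 1) ^ 2 - 4 * M.det)) / 2 : ℝ) : ℂ)} ∧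
    0 ≤ (Matrix.trace M - 1 +
          Real.sqrt ((Matrix.trace M - 1) ^ 2 - 4 * M.det)) / 2 ∧
    ((Matrix.trace M - 1 -
          Real.sqrt ((Matrix.trace M - 1) ^ 2 - 4 * M.det)) / 2 < 0
      ↔ M.det < 0) ∧
    (∀ Q : Matrix (Fin 3) (Fin 3) ℝ, IsGenerator Q →
      Q 0 2 ≤ Q 1 2 → Q 2 0 ≤ Q 1 0 →
      ∀ z : ℂ, ((Q.map (Complex.ofReal ·)).charpoly).IsRoot z →
        z.im = 0 ∧ z.re ≤ 0) := by
  -- row sums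
  have hr0 : M 0 0 + M 0 1 + M 0 2 = 1 := by
    have := hM.2 0; rwa [Fin.sum_univ_three] at this
  have hr1 : M 1 0 + M 1 1 + M 1 2 = 1 := by
    have := hM.2 1; rwa [Fin.sum_univ_three] at this
  have hr2 : M 2 0 + M 2 1 + M 2 2 = 1 := by
    have := hM.2 2; rwa [Fin.sum_univ_three] at this
  -- monotonicity consequences
  have eI2 : (Finset.Ici (2 : Fin 3)) = {2} := by decide
  have eI1 : (Finset.Ici (1 : Fin 3)) = {1, 2} := by decide
  have hc01 : M 0 2 ≤ M 1 2 := by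
    have := hmono 0 1 (by decide) 2; rw [eI2] at this; simpa using this
  have hc12 : M 1 2 ≤ M 2 2 := by
    have := hmono 1 2 (by decide) 2; rw [eI2] at this; simpa using this
  have ha01 : M 0 1 + M 0 2 ≤ M 1 1 + M 1 2 := by
    have := hmono 0 1 (by decide) 1; rw [eI1] at this; simpa using this
  have ha12 : M 1 1 + M 1 2 ≤ M 2 1 + M 2 2 := by
    have := hmono 1 2 (by decide) 1; rw [eI1] at this; simpa using this
  -- determinant identity
  have hdet : M.det = ((M 1 1 + M 1 2) - (M 0 1 + M 0 2)) * (M 2 2 - M 1 2)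
      - (M 1 2 - M 0 2) * ((M 2 1 + M 2 2) - (M 1 1 + M 1 2)) := by
    have e0 : M 0 0 = 1 - M 0 1 - M 0 2 := by linarith
    have e1 : M 1 0 = 1 - M 1 1 - M 1 2 := by linarith
    have e2 : M 2 0 = 1 - M 2 1 - M 2 2 := by linarith
    rw [Matrix.det_fin_three, e0, e1, e2]; ring
  obtain ⟨hΔnn, hroots⟩ := stmt17_master M 1 M.det hr0 hr1 hr2 hdet
    (by linarith) (by linarith)
  rw [Complex.ofReal_one] at hroots
  have hs : Matrix.trace M - 1 =
      ((M 1 1 + M 1 2) - (M 0 1 + M 0 2)) + (M 2 2 - M 1 2) := by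
    rw [Matrix.trace_fin_three]; linarith
  have hs0 : 0 ≤ Matrix.trace M - 1 := by rw [hs]; linarith
  set R : ℝ := Real.sqrt ((Matrix.trace M - 1) ^ 2 - 4 * M.det) with hRdef
  have hR0 : 0 ≤ R := Real.sqrt_nonneg _
  have hR2 : R ^ 2 = (Matrix.trace M - 1) ^ 2 - 4 * M.det := Real.sq_sqrt hΔnn
  refine ⟨?_, hΔnn, hroots, by linarith, ?_, ?_⟩
  · -- all roots real
    intro z hz
    have hne : ((M.map (Complex.ofReal ·)).charpoly) ≠ 0 :=
      (Matrix.charpoly_monic _).ne_zero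
    have hmem : z ∈ ((M.map (Complex.ofReal ·)).charpoly).roots :=
      Polynomial.mem_roots'.2 ⟨hne, hz⟩
    rw [hroots] at hmem
    simp only [Multiset.insert_eq_cons, Multiset.mem_cons, Multiset.mem_singleton] at hmem
    rcases hmem with h | h | h <;> subst h <;> simp
  · -- negative eigenvalue iff det < 0
    constructor
    · intro h
      have hRs : Matrix.trace M - 1 < R := by linarith
      nlinarith [hR2]
    · intro h
      have hRs : Matrix.trace M - 1 < R := by nlinarith [hR2]
      linarith
  · -- generator part
    intro Q hQ hA hB z hz
    have hq0 : Q 0 0 + Q 0 1 + Q 0 2 = 0 := by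
      have := hQ.2 0; rwa [Fin.sum_univ_three] at this
    have hq1 : Q 1 0 + Q 1 1 + Q 1 2 = 0 := by
      have := hQ.2 1; rwa [Fin.sum_univ_three] at this
    have hq2 : Q 2 0 + Q 2 1 + Q 2 2 = 0 := by
      have := hQ.2 2; rwa [Fin.sum_univ_three] at this
    have n01 : 0 ≤ Q 0 1 := hQ.1 0 1 (by decide)
    have n02 : 0 ≤ Q 0 2 := hQ.1 0 2 (by decide)
    have n10 : 0 ≤ Q 1 0 := hQ.1 1 0 (by decide)
    have n12 : 0 ≤ Q 1 2 := hQ.1 1 2 (by decide)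
    have n20 : 0 ≤ Q 2 0 := hQ.1 2 0 (by decide)
    have n21 : 0 ≤ Q 2 1 := hQ.1 2 1 (by decide)
    set p : ℝ := ((Q 1 1 + Q 1 2) - (Q 0 1 + Q 0 2)) * (Q 2 2 - Q 1 2)
        - (Q 1 2 - Q 0 2) * ((Q 2 1 + Q 2 2) - (Q 1 1 + Q 1 2)) with hpdef
    obtain ⟨hΔ', hroots'⟩ := stmt17_master Q 0 p hq0 hq1 hq2 hpdef
      (by linarith) (by linarith)
    have hp0 : 0 ≤ p := by
      have e1 : Q 1 1 = -Q 1 0 - Q 1 2 := by linarith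
      have e2 : Q 2 2 = -Q 2 0 - Q 2 1 := by linarith
      rw [hpdef, e1, e2]
      linarith [mul_nonneg n10 n20, mul_nonneg n10 n21, mul_nonneg n01 n20,
        mul_nonneg n01 n21, mul_nonneg n01 n12, mul_nonneg n02 n21,
        mul_nonneg n02 n12, mul_nonneg n12 n20, mul_nonneg n02 n10]
    have hs0' : Matrix.trace Q - 0 ≤ 0 := by
      rw [Matrix.trace_fin_three]; linarith
    set R' : ℝ := Real.sqrt ((Matrix.trace Q - 0) ^ 2 - 4 * p) with hR'def
    have hR'0 : 0 ≤ R' := Real.sqrt_nonneg _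
    have hR'2 : R' ^ 2 = (Matrix.trace Q - 0) ^ 2 - 4 * p := Real.sq_sqrt hΔ'
    have hule : (Matrix.trace Q - 0 + R') / 2 ≤ 0 := by
      have hle : R' ≤ -(Matrix.trace Q - 0) := by
        rw [hR'def]
        calc Real.sqrt ((Matrix.trace Q - 0) ^ 2 - 4 * p)
            ≤ Real.sqrt ((Matrix.trace Q - 0) ^ 2) := Real.sqrt_le_sqrt (by linarith)
          _ = |Matrix.trace Q - 0| := Real.sqrt_sq_eq_abs _
          _ = -(Matrix.trace Q - 0) := abs_of_nonpos hs0'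
      linarith
    have hvle : (Matrix.trace Q - 0 - R') / 2 ≤ 0 := by linarith
    have hne : ((Q.map (Complex.ofReal ·)).charpoly) ≠ 0 :=
      (Matrix.charpoly_monic _).ne_zero
    have hmem : z ∈ ((Q.map (Complex.ofReal ·)).charpoly).roots :=
      Polynomial.mem_roots'.2 ⟨hne, hz⟩
    rw [hroots'] at hmem
    simp only [Multiset.insert_eq_cons, Multiset.mem_cons, Multiset.mem_singleton] at hmem
    rcases hmem with h | h | h <;> subst h
    · exact ⟨Complex.ofReal_im _, by rw [Complex.ofReal_re]⟩
    · exact ⟨Complex.ofReal_im _, by rw [Complex.ofReal_re]; exact hule⟩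
    · exact ⟨Complex.ofReal_im _, by rw [Complex.ofReal_re]; exact hvle⟩
end
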